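/- arXiv:1508.00600 — 5 statements merged into one kernel-verified Lean document; each statement's English description precedes it below -/
import Mathlib

section
/- Let V₁ and V₂ be independent random variables on a probability space, with V₁ exponentially distributed with rate 1 and V₂ exponentially distributed with rate 1. Let I be a Bernoulli(p) random variable independent of (V₁, V₂), where p ∈ (0,1). Then the random variable I·(p·V₁) + (1-I)·(V₁ + p·V₂) is exponentially distributed with rate 1. -/
open MeasureTheory ProbabilityTheory Set

/-- Gamma(a,1) law: density `u^(a-1) e^{-u} / Γ(a)` on `(0,∞)`. -/
noncomputable def gammaLaw (a : ℝ) : Measure ℝ :=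
  MeasureTheory.volume.withDensity fun x =>
    ENNReal.ofReal (if 0 < x then x ^ (a - 1) * Real.exp (-x) / Real.Gamma a else 0)

/-- Beta(a,b) law: density `u^(a-1)(1-u)^(b-1) / B(a,b)` on `(0,1)`. -/
noncomputable def betaLaw (a b : ℝ) : Measure ℝ :=
  MeasureTheory.volume.withDensity fun x =>
    ENNReal.ofReal (if x ∈ Set.Ioo (0 : ℝ) 1 then
      x ^ (a - 1) * (1 - x) ^ (b - 1) * Real.Gamma (a + b) / (Real.Gamma a * Real.Gamma b)
    else 0)

/-- Uniform law on `[a,b]`. -/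
noncomputable def uniformLaw (a b : ℝ) : Measure ℝ :=
  MeasureTheory.volume.withDensity fun x =>
    ENNReal.ofReal (if x ∈ Set.Icc a b then 1 / (b - a) else 0)

/-- Bernoulli(p) law on `ℝ` (mass `p` at `1`, mass `1-p` at `0`). -/
noncomputable def bernoulliLaw (p : ℝ) : Measure ℝ :=
  ENNReal.ofReal p • Measure.dirac (1 : ℝ) + ENNReal.ofReal (1 - p) • Measure.dirac (0 : ℝ)

section Auxiliary

open Real
open scoped ENNReal

lemma gammaLaw_one_eq : gammaLaw 1 = ProbabilityTheory.expMeasure 1 := by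
  rw [ProbabilityTheory.expMeasure, ProbabilityTheory.gammaMeasure, gammaLaw]
  apply withDensity_congr_ae
  filter_upwards [compl_mem_ae_iff.mpr (volume_singleton (a := (0:ℝ)))] with x hx
  rw [ProbabilityTheory.gammaPDF_eq]
  congr 1
  rcases lt_trichotomy x 0 with h|h|h
  · rw [if_neg (not_lt.mpr h.le), if_neg (not_le.mpr h)]
  · exact absurd h hx
  · rw [if_pos h, if_pos h.le]
    simp [Real.Gamma_one, sub_self, Real.rpow_zero]

lemma expM_Iic (t : ℝ) :
    ProbabilityTheory.expMeasure 1 (Iic t)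
      = ENNReal.ofReal (if 0 ≤ t then 1 - rexp (-t) else 0) := by
  rw [ProbabilityTheory.expMeasure, ProbabilityTheory.gammaMeasure,
    withDensity_apply _ measurableSet_Iic]
  have h : (gammaPDF 1 1) = ProbabilityTheory.exponentialPDF 1 := rfl
  rw [h, ProbabilityTheory.lintegral_exponentialPDF_eq_antiDeriv one_pos t]
  simp [one_mul]

lemma smul_prod' {α β : Type*} [MeasurableSpace α] [MeasurableSpace β] (c : ℝ≥0∞) (hc : c ≠ ⊤)
    (ν : Measure α) [IsFiniteMeasure ν] (ρ : Measure β) [SigmaFinite ρ] :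
    (c • ν).prod ρ = c • (ν.prod ρ) := by
  haveI : IsFiniteMeasure (c • ν) :=
    ⟨by rw [Measure.smul_apply, smul_eq_mul]
        exact ENNReal.mul_lt_top hc.lt_top (measure_lt_top ν _)⟩
  refine Measure.prod_eq fun s t hs ht => ?_
  simp [Measure.smul_apply, Measure.prod_prod, smul_eq_mul, mul_assoc]

lemma conv_integral {p x : ℝ} (hp0 : 0 < p) (hp1 : p < 1) (hx : 0 ≤ x) :
    ∫ v in (0:ℝ)..x, rexp (-v) * (1 - rexp (-((x - v) / p)))
      = (1 - rexp (-x)) - (p / (1 - p)) * (rexp (-x) - rexp (-(x / p))) := by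
  have hpne : p ≠ 0 := hp0.ne'
  set c : ℝ := (1 - p) / p with hc
  have hcpos : 0 < c := div_pos (by linarith) hp0
  have hcne : c ≠ 0 := hcpos.ne'
  have hfun : ∀ v : ℝ, rexp (-v) * (1 - rexp (-((x - v) / p)))
      = rexp (-v) - rexp (-(x / p)) * rexp (c * v) := by
    intro v
    rw [mul_sub, mul_one, ← Real.exp_add, ← Real.exp_add]
    congr 2
    rw [hc]
    field_simp
    ring
  have hG : ∀ v : ℝ, HasDerivAt (fun t => -rexp (-t) - rexp (-(x / p)) * rexp (c * t) / c)
      (rexp (-v) - rexp (-(x / p)) * rexp (c * v)) v := by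
    intro v
    have h1 : HasDerivAt (fun t : ℝ => -t) (-1) v := (hasDerivAt_id v).neg
    have h2 : HasDerivAt (fun t : ℝ => rexp (-t)) (rexp (-v) * (-1)) v :=
      (Real.hasDerivAt_exp (-v)).comp v h1
    have h3 : HasDerivAt (fun t : ℝ => c * t) c v := by
      simpa using (hasDerivAt_id v).const_mul c
    have h4 : HasDerivAt (fun t : ℝ => rexp (c * t)) (rexp (c * v) * c) v :=
      (Real.hasDerivAt_exp (c * v)).comp v h3
    have := (h2.neg).sub ((h4.const_mul (rexp (-(x / p)))).div_const c)
    convert this using 1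
    · rfl
    · rfl
    · rfl
    rw [mul_div_assoc, mul_div_cancel_right₀ _ hcne]
    ring
  have hInt : IntervalIntegrable (fun v => rexp (-v) - rexp (-(x / p)) * rexp (c * v))
      volume 0 x := by
    apply Continuous.intervalIntegrable
    continuity
  have := intervalIntegral.integral_eq_sub_of_hasDerivAt (fun v _ => hG v) hInt
  calc ∫ v in (0:ℝ)..x, rexp (-v) * (1 - rexp (-((x - v) / p)))
      = ∫ v in (0:ℝ)..x, (rexp (-v) - rexp (-(x / p)) * rexp (c * v)) := by
        apply intervalIntegral.integral_congr; intro v _; exact hfun v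
    _ = (-rexp (-x) - rexp (-(x / p)) * rexp (c * x) / c)
        - (-rexp (-0) - rexp (-(x / p)) * rexp (c * 0) / c) := this
    _ = (1 - rexp (-x)) - (p / (1 - p)) * (rexp (-x) - rexp (-(x / p))) := by
        have hkey : rexp (-(x / p)) * rexp (c * x) = rexp (-x) := by
          rw [← Real.exp_add]
          congr 1
          rw [hc]
          field_simp
          ring
        rw [hkey]
        simp only [mul_zero, Real.exp_zero, neg_zero, mul_one]
        rw [hc]
        field_simp
        ring

lemma conv_Iic {p : ℝ} (hp0 : 0 < p) (hp1 : p < 1) (x : ℝ) :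
    Measure.map (fun vw : ℝ × ℝ => vw.1 + p * vw.2) ((gammaLaw 1).prod (gammaLaw 1)) (Iic x)
      = ENNReal.ofReal (if 0 ≤ x then
          (1 - rexp (-x)) - (p / (1 - p)) * (rexp (-x) - rexp (-(x / p))) else 0) := by
  haveI : IsProbabilityMeasure (gammaLaw 1) := by
    rw [gammaLaw_one_eq]; exact isProbabilityMeasure_expMeasure one_pos
  have hgm : Measurable (fun vw : ℝ × ℝ => vw.1 + p * vw.2) :=
    measurable_fst.add (measurable_snd.const_mul p)
  rw [Measure.map_apply hgm measurableSet_Iic]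
  have hS : MeasurableSet ((fun vw : ℝ × ℝ => vw.1 + p * vw.2) ⁻¹' (Iic x)) :=
    hgm measurableSet_Iic
  rw [Measure.prod_apply hS]
  have hsec : ∀ v : ℝ, (Prod.mk v ⁻¹' ((fun vw : ℝ × ℝ => vw.1 + p * vw.2) ⁻¹' (Iic x)))
      = Iic ((x - v) / p) := by
    intro v; ext w
    simp only [mem_preimage, mem_Iic]
    rw [le_div_iff₀ hp0]
    constructor <;> intro h <;> nlinarith
  have hint1 : ∫⁻ v, gammaLaw 1 (Prod.mk v ⁻¹' ((fun vw : ℝ × ℝ => vw.1 + p * vw.2) ⁻¹' (Iic x)))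
        ∂(gammaLaw 1)
      = ∫⁻ v, ENNReal.ofReal (if 0 ≤ (x - v) / p then 1 - rexp (-((x - v) / p)) else 0)
        ∂(gammaLaw 1) := by
    apply lintegral_congr
    intro v
    rw [hsec v, gammaLaw_one_eq, expM_Iic]
  rw [hint1]
  have hFr : Measurable (fun v : ℝ => if 0 ≤ (x - v) / p then 1 - rexp (-((x - v) / p)) else 0) := by
    apply Measurable.ite (measurableSet_le measurable_const (by fun_prop)) (by fun_prop)
      measurable_const
  have hF : Measurable (fun v : ℝ =>
      ENNReal.ofReal (if 0 ≤ (x - v) / p then 1 - rexp (-((x - v) / p)) else 0)) :=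
    hFr.ennreal_ofReal
  have hpdf : Measurable (ProbabilityTheory.gammaPDF 1 1) :=
    (measurable_gammaPDFReal 1 1).ennreal_ofReal
  rw [gammaLaw_one_eq, ProbabilityTheory.expMeasure, ProbabilityTheory.gammaMeasure,
    lintegral_withDensity_eq_lintegral_mul _ hpdf hF]
  by_cases hx : 0 ≤ x
  · have key : (fun v => (ProbabilityTheory.gammaPDF 1 1 * fun v =>
          ENNReal.ofReal (if 0 ≤ (x - v) / p then 1 - rexp (-((x - v) / p)) else 0)) v)
        = (Icc 0 x).indicator
            (fun v => ENNReal.ofReal (rexp (-v) * (1 - rexp (-((x - v) / p))))) := by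
      funext v
      simp only [Pi.mul_apply]
      by_cases hv : v ∈ Icc 0 x
      · obtain ⟨hv0, hvx⟩ := hv
        rw [indicator_of_mem (mem_Icc.mpr ⟨hv0, hvx⟩),
          if_pos (div_nonneg (by linarith) hp0.le)]
        have : ProbabilityTheory.gammaPDF 1 1 v = ENNReal.ofReal (rexp (-v)) := by
          rw [gammaPDF_of_nonneg hv0]
          norm_num [Real.Gamma_one]
        rw [this, ← ENNReal.ofReal_mul (Real.exp_nonneg _)]
      · rw [indicator_of_notMem hv]
        rcases not_and_or.mp hv with h | h
        · push_neg at h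
          rw [gammaPDF_of_neg h, zero_mul]
        · push_neg at h
          rw [if_neg (not_le.mpr (div_neg_of_neg_of_pos (by linarith) hp0)),
            ENNReal.ofReal_zero, mul_zero]
    rw [key, lintegral_indicator measurableSet_Icc]
    have hgc : Continuous (fun v : ℝ => rexp (-v) * (1 - rexp (-((x - v) / p)))) := by
      fun_prop
    have hint : IntegrableOn (fun v : ℝ => rexp (-v) * (1 - rexp (-((x - v) / p)))) (Icc 0 x) :=
      hgc.integrableOn_Icc
    have hnn : 0 ≤ᵐ[volume.restrict (Icc 0 x)]
        fun v : ℝ => rexp (-v) * (1 - rexp (-((x - v) / p))) := by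
      filter_upwards [ae_restrict_mem measurableSet_Icc] with v hv
      obtain ⟨hv0, hvx⟩ := hv
      apply mul_nonneg (Real.exp_nonneg _)
      rw [sub_nonneg]
      apply Real.exp_le_one_iff.mpr
      simp only [Left.neg_nonpos_iff]
      exact div_nonneg (by linarith) hp0.le
    rw [← ofReal_integral_eq_lintegral_ofReal hint hnn]
    rw [if_pos hx, ← conv_integral hp0 hp1 hx]
    congr 1
    rw [integral_Icc_eq_integral_Ioc, ← intervalIntegral.integral_of_le hx]
  · push_neg at hx
    have hzero : ∀ v : ℝ, (ProbabilityTheory.gammaPDF 1 1 * fun v =>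
        ENNReal.ofReal (if 0 ≤ (x - v) / p then 1 - rexp (-((x - v) / p)) else 0)) v = 0 := by
      intro v
      simp only [Pi.mul_apply]
      rcases lt_or_ge v 0 with h | h
      · rw [gammaPDF_of_neg h, zero_mul]
      · rw [if_neg (not_le.mpr (div_neg_of_neg_of_pos (by linarith) hp0)),
          ENNReal.ofReal_zero, mul_zero]
    simp only [hzero, lintegral_zero, if_neg (not_le.mpr hx), ENNReal.ofReal_zero]

lemma scale_Iic {p : ℝ} (hp0 : 0 < p) (x : ℝ) :
    Measure.map (fun vw : ℝ × ℝ => p * vw.1) ((gammaLaw 1).prod (gammaLaw 1)) (Iic x)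
      = ENNReal.ofReal (if 0 ≤ x then 1 - rexp (-(x / p)) else 0) := by
  haveI : IsProbabilityMeasure (gammaLaw 1) := by
    rw [gammaLaw_one_eq]; exact isProbabilityMeasure_expMeasure one_pos
  rw [Measure.map_apply (measurable_fst.const_mul p) measurableSet_Iic]
  have hpre : (fun vw : ℝ × ℝ => p * vw.1) ⁻¹' (Iic x) = Iic (x / p) ×ˢ univ := by
    ext vw
    simp only [mem_preimage, mem_Iic, mem_prod, mem_univ, and_true]
    rw [le_div_iff₀ hp0]
    constructor <;> intro h <;> nlinarith
  rw [hpre, Measure.prod_prod, measure_univ, mul_one, gammaLaw_one_eq, expM_Iic]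
  have hcond : (0 ≤ x / p) ↔ (0 ≤ x) := by
    rw [le_div_iff₀ hp0, zero_mul]
  rw [if_congr hcond rfl rfl]

end Auxiliary

theorem stmt_1 {Ω : Type*} [MeasurableSpace Ω] (P : Measure Ω) [IsProbabilityMeasure P]
    (p : ℝ) (hp0 : 0 < p) (hp1 : p < 1)
    (V₁ V₂ I : Ω → ℝ) (hV₁ : Measurable V₁) (hV₂ : Measurable V₂) (hI : Measurable I)
    (hV₁law : Measure.map V₁ P = gammaLaw 1) (hV₂law : Measure.map V₂ P = gammaLaw 1)
    (hIlaw : Measure.map I P = bernoulliLaw p)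
    (hV₁V₂ : IndepFun V₁ V₂ P)
    (hIind : IndepFun I (fun ω => (V₁ ω, V₂ ω)) P) :
    Measure.map (fun ω => I ω * (p * V₁ ω) + (1 - I ω) * (V₁ ω + p * V₂ ω)) P
      = gammaLaw 1 := by
  haveI hμprob : IsProbabilityMeasure (gammaLaw 1) := by
    rw [gammaLaw_one_eq]; exact isProbabilityMeasure_expMeasure one_pos
  set μ : Measure ℝ := gammaLaw 1 with hμ
  -- joint laws
  have hpair : Measure.map (fun ω => (V₁ ω, V₂ ω)) P = μ.prod μ := by
    have h := (indepFun_iff_map_prod_eq_prod_map_map hV₁.aemeasurable hV₂.aemeasurable).mp hV₁V₂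
    rw [hV₁law, hV₂law] at h
    exact h
  have hjoint : Measure.map (fun ω => (I ω, (V₁ ω, V₂ ω))) P
      = (bernoulliLaw p).prod (μ.prod μ) := by
    rw [← hIlaw, ← hpair]
    exact (indepFun_iff_map_prod_eq_prod_map_map hI.aemeasurable
      (hV₁.prodMk hV₂).aemeasurable).mp hIind
  set g : ℝ × ℝ × ℝ → ℝ :=
    fun q => q.1 * (p * q.2.1) + (1 - q.1) * (q.2.1 + p * q.2.2) with hg
  have hgm : Measurable g := by
    rw [hg]
    fun_prop
  have hmapf : Measure.map (fun ω => I ω * (p * V₁ ω) + (1 - I ω) * (V₁ ω + p * V₂ ω)) P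
      = Measure.map g ((bernoulliLaw p).prod (μ.prod μ)) := by
    rw [← hjoint, Measure.map_map hgm (hI.prodMk (hV₁.prodMk hV₂))]
    rfl
  rw [hmapf]
  -- decompose the Bernoulli factor
  haveI hfin1 : IsFiniteMeasure (ENNReal.ofReal p • Measure.dirac (1 : ℝ)) := by
    constructor
    rw [Measure.smul_apply, smul_eq_mul, measure_univ, mul_one]
    exact ENNReal.ofReal_lt_top
  haveI hfin0 : IsFiniteMeasure (ENNReal.ofReal (1 - p) • Measure.dirac (0 : ℝ)) := by
    constructor
    rw [Measure.smul_apply, smul_eq_mul, measure_univ, mul_one]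
    exact ENNReal.ofReal_lt_top
  have hdec : Measure.map g ((bernoulliLaw p).prod (μ.prod μ))
      = ENNReal.ofReal p • Measure.map (fun vw : ℝ × ℝ => p * vw.1) (μ.prod μ)
      + ENNReal.ofReal (1 - p) • Measure.map (fun vw : ℝ × ℝ => vw.1 + p * vw.2) (μ.prod μ) := by
    rw [bernoulliLaw, Measure.add_prod,
      smul_prod' _ ENNReal.ofReal_ne_top _ _,
      smul_prod' _ ENNReal.ofReal_ne_top _ _,
      Measure.dirac_prod, Measure.dirac_prod,
      Measure.map_add _ _ hgm, Measure.map_smul, Measure.map_smul,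
      Measure.map_map hgm measurable_prodMk_left,
      Measure.map_map hgm measurable_prodMk_left]
    have h1 : (g ∘ Prod.mk (1:ℝ)) = fun vw : ℝ × ℝ => p * vw.1 := by
      funext vw
      simp [hg, Function.comp]
    have h0 : (g ∘ Prod.mk (0:ℝ)) = fun vw : ℝ × ℝ => vw.1 + p * vw.2 := by
      funext vw
      simp [hg, Function.comp]
    rw [h1, h0]
  rw [hdec]
  -- identify the two pushforwards as probability measures (for finiteness)
  haveI hm1 : IsProbabilityMeasure (Measure.map (fun vw : ℝ × ℝ => p * vw.1) (μ.prod μ)) :=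
    Measure.isProbabilityMeasure_map (measurable_fst.const_mul p).aemeasurable
  haveI hm2 : IsProbabilityMeasure
      (Measure.map (fun vw : ℝ × ℝ => vw.1 + p * vw.2) (μ.prod μ)) :=
    Measure.isProbabilityMeasure_map (measurable_fst.add (measurable_snd.const_mul p)).aemeasurable
  haveI : IsFiniteMeasure (ENNReal.ofReal p •
      Measure.map (fun vw : ℝ × ℝ => p * vw.1) (μ.prod μ)) := by
    constructor
    rw [Measure.smul_apply, smul_eq_mul, measure_univ, mul_one]
    exact ENNReal.ofReal_lt_top
  haveI : IsFiniteMeasure (ENNReal.ofReal (1 - p) •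
      Measure.map (fun vw : ℝ × ℝ => vw.1 + p * vw.2) (μ.prod μ)) := by
    constructor
    rw [Measure.smul_apply, smul_eq_mul, measure_univ, mul_one]
    exact ENNReal.ofReal_lt_top
  refine Measure.ext_of_Iic _ _ fun x => ?_
  rw [Measure.add_apply, Measure.smul_apply, Measure.smul_apply, smul_eq_mul, smul_eq_mul,
    scale_Iic hp0 x, conv_Iic hp0 hp1 x, hμ, gammaLaw_one_eq, expM_Iic]
  by_cases hx : 0 ≤ x
  · rw [if_pos hx, if_pos hx, if_pos hx]
    have hA : (0:ℝ) ≤ 1 - Real.exp (-(x / p)) := by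
      rw [sub_nonneg]
      exact Real.exp_le_one_iff.mpr (by simp [div_nonneg hx hp0.le])
    have hconv : Real.exp (-x) ≤ p * Real.exp (-(x / p)) + (1 - p) * 1 := by
      have h := convexOn_exp.2 (Set.mem_univ (-(x / p))) (Set.mem_univ 0)
        hp0.le (by linarith : (0:ℝ) ≤ 1 - p) (by ring)
      simp only [smul_eq_mul, mul_zero, add_zero, Real.exp_zero] at h
      have harg : p * -(x / p) = -x := by
        field_simp
      rw [harg] at h
      linarith
    have hB : (0:ℝ) ≤ (1 - p) * ((1 - Real.exp (-x))
        - p / (1 - p) * (Real.exp (-x) - Real.exp (-(x / p)))) := by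
      have h1p : (1:ℝ) - p ≠ 0 := by linarith
      have heq : (1 - p) * ((1 - Real.exp (-x))
          - p / (1 - p) * (Real.exp (-x) - Real.exp (-(x / p))))
          = p * Real.exp (-(x / p)) + (1 - p) - Real.exp (-x) := by
        field_simp
        ring
      rw [heq]
      linarith
    rw [← ENNReal.ofReal_mul hp0.le, ← ENNReal.ofReal_mul (by linarith : (0:ℝ) ≤ 1 - p),
      ← ENNReal.ofReal_add (mul_nonneg hp0.le hA) hB]
    congr 1
    have h1p : (1:ℝ) - p ≠ 0 := by linarith
    field_simp
    ring
  · rw [if_neg hx, if_neg hx, if_neg hx]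
    simp
end

section
/- Let z > 0, and let t ∈ ℝ with t ≠ 0. Then ∫₀¹ z(1-u)^{z-1}/(1 - (1 - u/2)·i·t)^{z+1} du = (1 - i t)^{-z}·(1 - i t/2)^{-1}, where the integral is of a complex-valued function and i is the imaginary unit. -/
open Complex intervalIntegral

theorem stmt_7 (z t : ℝ) (hz : 0 < z) (ht : t ≠ 0) :
    ∫ u in (0:ℝ)..1,
        ((z * (1 - u) ^ (z - 1) : ℝ) : ℂ) /
          (1 - (1 - (u : ℂ) / 2) * Complex.I * t) ^ ((z : ℂ) + 1) =
      (1 - Complex.I * t) ^ (-(z : ℂ)) * (1 - Complex.I * t / 2)⁻¹ := by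
  set a : ℝ → ℂ := fun u => 1 - (1 - (u : ℂ) / 2) * Complex.I * t with ha
  have hre : ∀ u : ℝ, (a u).re = 1 := by
    intro u
    simp [ha, Complex.sub_re, Complex.mul_re, Complex.mul_im]
  have hslit : ∀ u : ℝ, a u ∈ Complex.slitPlane := by
    intro u
    rw [Complex.mem_slitPlane_iff, hre]
    exact Or.inl one_pos
  have hane : ∀ u : ℝ, a u ≠ 0 := fun u => Complex.slitPlane_ne_zero (hslit u)
  have hc2 : (1 : ℂ) - Complex.I * t / 2 ≠ 0 := by
    intro h
    have : ((1 : ℂ) - Complex.I * t / 2).re = 1 := by simp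
    rw [h] at this; simp at this
  -- the integrand
  set f : ℝ → ℂ := fun u =>
    ((z * (1 - u) ^ (z - 1) : ℝ) : ℂ) / (a u) ^ ((z : ℂ) + 1) with hf
  -- antiderivative
  set F : ℝ → ℂ := fun u =>
    -(1 - Complex.I * t / 2)⁻¹ * (((1 - u) ^ z : ℝ) : ℂ) * (a u) ^ (-(z : ℂ)) with hF
  have hacont : Continuous a := by
    fun_prop
  -- integrability of f
  have hint : IntervalIntegrable f MeasureTheory.volume 0 1 := by
    have h1 : IntervalIntegrable (fun x : ℝ => x ^ (z - 1)) MeasureTheory.volume 0 1 :=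
      intervalIntegrable_rpow' (by linarith)
    have h2 := (h1.comp_sub_left 1).symm
    simp only [sub_self, sub_zero] at h2
    have h3 : IntervalIntegrable (fun x : ℝ => z * (1 - x) ^ (z - 1))
        MeasureTheory.volume 0 1 := h2.const_mul z
    have h4 : IntervalIntegrable (fun x : ℝ => ((z * (1 - x) ^ (z - 1) : ℝ) : ℂ))
        MeasureTheory.volume 0 1 := ⟨h3.1.ofReal, h3.2.ofReal⟩
    have h5 : ContinuousOn (fun u : ℝ => ((a u) ^ ((z : ℂ) + 1))⁻¹) (Set.uIcc 0 1) := by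
      intro u _
      refine ContinuousAt.continuousWithinAt ?_
      exact (((continuousAt_cpow_const (hslit u)).comp hacont.continuousAt).inv₀
        (by simp [Complex.cpow_eq_zero_iff, hane u]))
    have := h4.mul_continuousOn h5
    simpa only [hf, div_eq_mul_inv] using this
  have key : ∀ u ∈ Set.Ioo (0:ℝ) 1, HasDerivAt F (f u) u := by
    intro u hu
    have h1u : (1 : ℝ) - u > 0 := by linarith [hu.2]
    -- derivative of the real power part
    have hP : HasDerivAt (fun x : ℝ => (1 - x) ^ z) (-(z * (1 - u) ^ (z - 1))) u := by
      have := ((hasDerivAt_id u).const_sub 1).rpow_const (p := z) (Or.inl h1u.ne')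
      convert this using 1
      all_goals simp only [id_eq]
      ring
    have hPc : HasDerivAt (fun x : ℝ => (((1 - x) ^ z : ℝ) : ℂ))
        ((-(z * (1 - u) ^ (z - 1)) : ℝ) : ℂ) u := hP.ofReal_comp
    -- derivative of a
    have hQ0 : HasDerivAt a (Complex.I * t / 2) u := by
      have h0 : HasDerivAt (fun x : ℝ => ((x : ℝ) : ℂ)) ((1 : ℝ) : ℂ) u :=
        (hasDerivAt_id u).ofReal_comp
      have := (((h0.div_const 2).const_sub 1).mul_const Complex.I).mul_const (t : ℂ)
      have h2 := this.const_sub 1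
      convert h2 using 1
      · rfl
      push_cast
      ring
    have hQ : HasDerivAt (fun x : ℝ => (a x) ^ (-(z : ℂ)))
        (-(z : ℂ) * (a u) ^ (-(z : ℂ) - 1) * (Complex.I * t / 2)) u :=
      (Complex.hasStrictDerivAt_cpow_const (hslit u)).hasDerivAt.comp u hQ0
    have hFd := ((hPc.mul hQ).const_mul (-(1 - Complex.I * t / 2)⁻¹))
    convert hFd using 1
    · rfl
    · funext y
      rw [hF]
      simp only [Pi.mul_apply]
      ring
    -- now algebraic identity
    have e1 : ((1 - u : ℝ) ^ z : ℝ) = (1 - u) * (1 - u) ^ (z - 1) := by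
      rw [show z = 1 + (z - 1) by ring, Real.rpow_add h1u, Real.rpow_one]
      ring_nf
    have e2 : (a u) ^ (-(z : ℂ)) = (a u) ^ (-((z : ℂ) + 1)) * (a u) := by
      rw [show -(z : ℂ) = -((z : ℂ) + 1) + 1 by ring,
        Complex.cpow_add _ _ (hane u), Complex.cpow_one]
    have e3 : (a u) ^ (-(z : ℂ) - 1) = (a u) ^ (-((z : ℂ) + 1)) := by
      ring_nf
    have e4 : a u + ((1 - u : ℝ) : ℂ) * (Complex.I * t / 2) = 1 - Complex.I * t / 2 := by
      simp only [ha]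
      push_cast
      ring
    have e4' : a u = (1 - Complex.I * t / 2) - ((1 - u : ℝ) : ℂ) * (Complex.I * t / 2) := by
      rw [← e4]; ring
    rw [hf]
    simp only
    rw [div_eq_mul_inv, ← Complex.cpow_neg, e3, e2, e1]
    set A : ℂ := a u ^ (-((z : ℂ) + 1)) with hA
    rw [e4']
    push_cast
    have h9 : ((1 : ℂ) - Complex.I * t / 2) * ((1 : ℂ) - Complex.I * t / 2)⁻¹ = 1 :=
      mul_inv_cancel₀ hc2
    linear_combination (-((z : ℂ) * ((((1 - u) ^ (z - 1) : ℝ)) : ℂ) * A)) * h9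
  have hFcont : ContinuousOn F (Set.Icc 0 1) := by
    have c1 : Continuous fun u : ℝ => (((1 - u) ^ z : ℝ) : ℂ) := by
      refine Complex.continuous_ofReal.comp ?_
      exact (continuous_const.sub continuous_id).rpow_const fun x => Or.inr hz.le
    have c2 : ContinuousOn (fun u : ℝ => (a u) ^ (-(z : ℂ))) (Set.Icc 0 1) := by
      intro u _
      exact ((continuousAt_cpow_const (hslit u)).comp hacont.continuousAt).continuousWithinAt
    exact (continuousOn_const.mul c1.continuousOn).mul c2
  have hFTC := intervalIntegral.integral_eq_sub_of_hasDerivAt_of_le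
    (by norm_num) hFcont key hint
  have hI : (∫ u in (0:ℝ)..1, f u) = F 1 - F 0 := hFTC
  rw [show (∫ u in (0:ℝ)..1,
        ((z * (1 - u) ^ (z - 1) : ℝ) : ℂ) /
          (1 - (1 - (u : ℂ) / 2) * Complex.I * t) ^ ((z : ℂ) + 1)) =
      ∫ u in (0:ℝ)..1, f u from rfl, hI]
  have hF1 : F 1 = 0 := by
    simp [hF, Real.zero_rpow hz.ne']
  have hF0 : F 0 = -(1 - Complex.I * t / 2)⁻¹ * (1 - Complex.I * t) ^ (-(z : ℂ)) := by
    have : a 0 = 1 - Complex.I * t := by simp [ha]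
    simp [hF, this, Real.one_rpow]
  rw [hF1, hF0]
  ring
end

section
/- Let w, y > 0. Let A ~ Beta(w, y) and V₁ ~ Gamma(w+y, 1) and V₂ ~ Gamma(y, 1) be mutually independent. Then A·V₁ + V₂ has distribution Gamma(w+y, 1). -/
open MeasureTheory ProbabilityTheory Set
open scoped ENNReal

namespace StmtAux

noncomputable def gd (a x : ℝ) : ℝ := if 0 < x then x ^ (a - 1) * Real.exp (-x) / Real.Gamma a else 0

noncomputable def bd (a b x : ℝ) : ℝ := if x ∈ Set.Ioo (0 : ℝ) 1 then
    x ^ (a - 1) * (1 - x) ^ (b - 1) * Real.Gamma (a + b) / (Real.Gamma a * Real.Gamma b) else 0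

lemma gammaLaw_eq (a : ℝ) : gammaLaw a = volume.withDensity fun x => ENNReal.ofReal (gd a x) := rfl

lemma betaLaw_eq (a b : ℝ) : betaLaw a b = volume.withDensity fun x => ENNReal.ofReal (bd a b x) := rfl

lemma gd_of_pos {a x : ℝ} (hx : 0 < x) :
    gd a x = x ^ (a - 1) * Real.exp (-x) / Real.Gamma a := if_pos hx

lemma gd_of_nonpos {a x : ℝ} (hx : ¬ 0 < x) : gd a x = 0 := if_neg hx

lemma bd_of_mem {a b x : ℝ} (hx : x ∈ Set.Ioo (0:ℝ) 1) :
    bd a b x = x ^ (a - 1) * (1 - x) ^ (b - 1) * Real.Gamma (a + b) / (Real.Gamma a * Real.Gamma b) :=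
  if_pos hx

lemma bd_of_not_mem {a b x : ℝ} (hx : x ∉ Set.Ioo (0:ℝ) 1) : bd a b x = 0 := if_neg hx

lemma measurable_gd (a : ℝ) : Measurable (gd a) := by
  unfold gd; apply Measurable.ite measurableSet_Ioi <;> fun_prop

lemma measurable_bd (a b : ℝ) : Measurable (bd a b) := by
  unfold bd; apply Measurable.ite measurableSet_Ioo <;> fun_prop

lemma gd_nonneg {a : ℝ} (ha : 0 < a) (x : ℝ) : 0 ≤ gd a x := by
  unfold gd; split
  · have := Real.Gamma_pos_of_pos ha
    positivity
  · exact le_refl _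

lemma bd_nonneg {a b : ℝ} (ha : 0 < a) (hb : 0 < b) (x : ℝ) : 0 ≤ bd a b x := by
  unfold bd; split
  · rename_i hx
    have h1 := Real.Gamma_pos_of_pos ha
    have h2 := Real.Gamma_pos_of_pos hb
    have h3 := Real.Gamma_pos_of_pos (add_pos ha hb)
    have h4 : (0:ℝ) ≤ 1 - x := by linarith [hx.2]
    have h5 : (0:ℝ) ≤ x := le_of_lt hx.1
    positivity
  · exact le_refl _

/-- linear scaling substitution -/
lemma lintegral_scale {a : ℝ} (ha : 0 < a) (F : ℝ → ℝ≥0∞) (hF : Measurable F) :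
    ∫⁻ x, F x = ENNReal.ofReal a * ∫⁻ x, F (a * x) := by
  have h1 : ∫⁻ x, F (a * x) = ENNReal.ofReal |a⁻¹| * ∫⁻ x, F x := by
    rw [← smul_eq_mul (ENNReal.ofReal |a⁻¹|), ← lintegral_smul_measure, ← Real.map_volume_mul_left ha.ne',
      lintegral_map hF (measurable_const_mul a)]
  rw [h1, ← mul_assoc, ← ENNReal.ofReal_mul ha.le, abs_of_pos (inv_pos.mpr ha),
    mul_inv_cancel₀ ha.ne', ENNReal.ofReal_one, one_mul]

/-- translation substitution -/
lemma lintegral_translate (c : ℝ) (F : ℝ → ℝ≥0∞) (hF : Measurable F) :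
    ∫⁻ x, F x = ∫⁻ x, F (x + c) := by
  conv_lhs => rw [← map_add_right_eq_self volume c]
  rw [lintegral_map hF (measurable_add_const c)]

/-- 1-D change of variables for lintegrals -/
lemma lintegral_image_1d {s : Set ℝ} {f f' : ℝ → ℝ} (hs : MeasurableSet s)
    (hf' : ∀ x ∈ s, HasDerivWithinAt f (f' x) s x) (hf : InjOn f s) (g : ℝ → ℝ≥0∞) :
    ∫⁻ x in f '' s, g x = ∫⁻ x in s, ENNReal.ofReal |f' x| * g (f x) := by
  simpa only [ContinuousLinearMap.det_toSpanSingleton] using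
    lintegral_image_eq_lintegral_abs_det_fderiv_mul volume hs
      (fun x hx => (hf' x hx).hasFDerivWithinAt) hf g



lemma gamma_mass {c : ℝ} (hc : 0 < c)
    (h : gammaLaw c Set.univ = 1) :
    ∫⁻ t in Ioi (0:ℝ), ENNReal.ofReal (t ^ (c - 1) * Real.exp (-t)) = ENNReal.ofReal (Real.Gamma c) := by
  have hΓ := Real.Gamma_pos_of_pos hc
  rw [gammaLaw_eq, withDensity_apply _ MeasurableSet.univ, Measure.restrict_univ] at h
  have hpt : ∀ t : ℝ, ENNReal.ofReal (gd c t)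
      = (Ioi (0:ℝ)).indicator (fun t => ENNReal.ofReal (t ^ (c-1) * Real.exp (-t)) * (ENNReal.ofReal (Real.Gamma c))⁻¹) t := by
    intro t
    by_cases ht : 0 < t
    · rw [gd_of_pos ht, indicator_of_mem (mem_Ioi.mpr ht), div_eq_mul_inv,
        ENNReal.ofReal_mul (by positivity), ENNReal.ofReal_inv_of_pos hΓ]
    · rw [gd_of_nonpos ht, indicator_of_notMem (by simpa using ht), ENNReal.ofReal_zero]
  rw [lintegral_congr hpt, lintegral_indicator measurableSet_Ioi,
    lintegral_mul_const' _ _ (ENNReal.inv_ne_top.mpr (by simpa using hΓ)),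
    ← div_eq_mul_inv, ENNReal.div_eq_one_iff (by simpa using hΓ) (by simp)] at h
  exact h

lemma beta_mass {w y : ℝ} (hw : 0 < w) (hy : 0 < y)
    (h : betaLaw w y Set.univ = 1) :
    ∫⁻ t in Ioo (0:ℝ) 1, ENNReal.ofReal (t ^ (w - 1) * (1 - t) ^ (y - 1))
      = ENNReal.ofReal (Real.Gamma w * Real.Gamma y / Real.Gamma (w + y)) := by
  have hΓw := Real.Gamma_pos_of_pos hw
  have hΓy := Real.Gamma_pos_of_pos hy
  have hΓwy := Real.Gamma_pos_of_pos (add_pos hw hy)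
  set C : ℝ := Real.Gamma (w + y) / (Real.Gamma w * Real.Gamma y) with hC
  have hCpos : 0 < C := by positivity
  rw [betaLaw_eq, withDensity_apply _ MeasurableSet.univ, Measure.restrict_univ] at h
  have hpt : ∀ t : ℝ, ENNReal.ofReal (bd w y t)
      = (Ioo (0:ℝ) 1).indicator
          (fun t => ENNReal.ofReal (t ^ (w-1) * (1-t) ^ (y-1)) * ENNReal.ofReal C) t := by
    intro t
    by_cases ht : t ∈ Ioo (0:ℝ) 1
    · have h1 : (0:ℝ) ≤ t := ht.1.le
      have h2 : (0:ℝ) ≤ 1 - t := by linarith [ht.2]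
      rw [bd_of_mem ht, indicator_of_mem ht, mul_div_assoc, ← hC,
        ENNReal.ofReal_mul (by positivity)]
    · rw [bd_of_not_mem ht, indicator_of_notMem ht, ENNReal.ofReal_zero]
  rw [lintegral_congr hpt, lintegral_indicator measurableSet_Ioo,
    lintegral_mul_const' _ _ ENNReal.ofReal_ne_top] at h
  have hCne : ENNReal.ofReal C ≠ 0 := by simpa using hCpos
  have h2 : ∫⁻ t in Ioo (0:ℝ) 1, ENNReal.ofReal (t ^ (w - 1) * (1 - t) ^ (y - 1))
      = (ENNReal.ofReal C)⁻¹ := by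
    have h3 := congrArg (fun z => z * (ENNReal.ofReal C)⁻¹) h
    simpa [mul_assoc, ENNReal.mul_inv_cancel hCne ENNReal.ofReal_ne_top] using h3
  rw [h2, ← ENNReal.ofReal_inv_of_pos hCpos, hC, inv_div]

lemma core_add {w y : ℝ} (hw : 0 < w) (hy : 0 < y)
    (hB : ∫⁻ t in Ioo (0:ℝ) 1, ENNReal.ofReal (t ^ (w - 1) * (1 - t) ^ (y - 1))
      = ENNReal.ofReal (Real.Gamma w * Real.Gamma y / Real.Gamma (w + y))) (u : ℝ) :
    ∫⁻ x, ENNReal.ofReal (gd w x) * ENNReal.ofReal (gd y (u - x))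
      = ENNReal.ofReal (gd (w + y) u) := by
  have hΓw := Real.Gamma_pos_of_pos hw
  have hΓy := Real.Gamma_pos_of_pos hy
  have hΓwy := Real.Gamma_pos_of_pos (add_pos hw hy)
  by_cases hu : 0 < u
  · set C : ℝ := u ^ (w + y - 2) * Real.exp (-u) / (Real.Gamma w * Real.Gamma y) with hCdef
    have hCpos : 0 < C := by positivity
    have h0 : ∀ x, ENNReal.ofReal (gd w x) * ENNReal.ofReal (gd y (u - x))
        = ENNReal.ofReal (gd w x * gd y (u - x)) :=
      fun x => (ENNReal.ofReal_mul (gd_nonneg hw x)).symm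
    have hFm : Measurable fun x => ENNReal.ofReal (gd w x * gd y (u - x)) :=
      ((measurable_gd w).mul ((measurable_gd y).comp (measurable_const.sub measurable_id))).ennreal_ofReal
    have key : ∀ t : ℝ, gd w (u * t) * gd y (u - u * t)
        = (if t ∈ Ioo (0:ℝ) 1 then t ^ (w - 1) * (1 - t) ^ (y - 1) else 0) * C := by
      intro t
      by_cases ht : t ∈ Ioo (0:ℝ) 1
      · rw [if_pos ht]
        have h1 : 0 < u * t := mul_pos hu ht.1
        have h2 : 0 < u - u * t := by nlinarith [ht.2]
        rw [gd_of_pos h1, gd_of_pos h2, div_mul_div_comm]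
        have e1 : (u * t) ^ (w - 1) = u ^ (w - 1) * t ^ (w - 1) := Real.mul_rpow hu.le ht.1.le
        have e2 : (u - u * t) ^ (y - 1) = u ^ (y - 1) * (1 - t) ^ (y - 1) := by
          rw [show u - u * t = u * (1 - t) by ring, Real.mul_rpow hu.le (by linarith [ht.2])]
        have e3 : u ^ (w - 1) * u ^ (y - 1) = u ^ (w + y - 2) := by
          rw [← Real.rpow_add hu]; ring_nf
        have e4 : Real.exp (-(u * t)) * Real.exp (-(u - u * t)) = Real.exp (-u) := by
          rw [← Real.exp_add]; ring_nf
        rw [hCdef, mul_div_assoc']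
        congr 1
        calc (u * t) ^ (w - 1) * Real.exp (-(u * t)) * ((u - u * t) ^ (y - 1) * Real.exp (-(u - u * t)))
            = (u ^ (w - 1) * u ^ (y - 1)) * (t ^ (w - 1) * (1 - t) ^ (y - 1))
              * (Real.exp (-(u * t)) * Real.exp (-(u - u * t))) := by rw [e1, e2]; ring
          _ = t ^ (w - 1) * (1 - t) ^ (y - 1) * (u ^ (w + y - 2) * Real.exp (-u)) := by
              rw [e3, e4]; ring
      · rw [if_neg ht, zero_mul]
        by_cases h : 0 < t
        · have h2 : (1:ℝ) ≤ t := by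
            by_contra h3
            exact ht ⟨h, by linarith⟩
          rw [gd_of_nonpos (by push_neg; nlinarith : ¬ 0 < u - u * t), mul_zero]
        · push_neg at h
          rw [gd_of_nonpos (by push_neg; nlinarith : ¬ 0 < u * t), zero_mul]
    calc ∫⁻ x, ENNReal.ofReal (gd w x) * ENNReal.ofReal (gd y (u - x))
        = ∫⁻ x, ENNReal.ofReal (gd w x * gd y (u - x)) := lintegral_congr h0
      _ = ENNReal.ofReal u * ∫⁻ t, ENNReal.ofReal (gd w (u * t) * gd y (u - u * t)) :=
          lintegral_scale hu _ hFm
      _ = ENNReal.ofReal u * ∫⁻ t, (Ioo (0:ℝ) 1).indicator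
            (fun t => ENNReal.ofReal ((t ^ (w - 1) * (1 - t) ^ (y - 1)) * C)) t := by
          congr 1
          refine lintegral_congr fun t => ?_
          rw [key t]
          by_cases ht : t ∈ Ioo (0:ℝ) 1
          · rw [if_pos ht, indicator_of_mem ht]
          · rw [if_neg ht, indicator_of_notMem ht, zero_mul, ENNReal.ofReal_zero]
      _ = ENNReal.ofReal u * ∫⁻ t in Ioo (0:ℝ) 1,
            ENNReal.ofReal ((t ^ (w - 1) * (1 - t) ^ (y - 1)) * C) := by
          rw [lintegral_indicator measurableSet_Ioo]
      _ = ENNReal.ofReal u * ((∫⁻ t in Ioo (0:ℝ) 1,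
            ENNReal.ofReal (t ^ (w - 1) * (1 - t) ^ (y - 1))) * ENNReal.ofReal C) := by
          congr 1
          rw [← lintegral_mul_const' (ENNReal.ofReal C) _ ENNReal.ofReal_ne_top]
          refine setLIntegral_congr_fun measurableSet_Ioo (fun t ht => ?_)
          have h1 : (0:ℝ) ≤ t := ht.1.le
          have h2 : (0:ℝ) ≤ 1 - t := by linarith [ht.2]
          rw [ENNReal.ofReal_mul (by positivity)]
      _ = ENNReal.ofReal u * (ENNReal.ofReal (Real.Gamma w * Real.Gamma y / Real.Gamma (w + y))
            * ENNReal.ofReal C) := by rw [hB]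
      _ = ENNReal.ofReal (gd (w + y) u) := by
          rw [gd_of_pos hu, ← ENNReal.ofReal_mul (by positivity), ← ENNReal.ofReal_mul hu.le]
          congr 1
          have e5 : u ^ (w + y - 2) * u = u ^ (w + y - 1) := by
            rw [← Real.rpow_add_one hu.ne']
            ring_nf
          calc u * (Real.Gamma w * Real.Gamma y / Real.Gamma (w + y) * C)
              = (u ^ (w + y - 2) * u) * Real.exp (-u)
                * (Real.Gamma w * Real.Gamma y / (Real.Gamma (w + y) * (Real.Gamma w * Real.Gamma y))) := by
                rw [hCdef]; ring
            _ = u ^ (w + y - 1) * Real.exp (-u) / Real.Gamma (w + y) := by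
                rw [e5]; field_simp
  · have hz : ∀ x : ℝ, ENNReal.ofReal (gd w x) * ENNReal.ofReal (gd y (u - x)) = 0 := by
      intro x
      by_cases hx : 0 < x
      · rw [gd_of_nonpos (x := u - x) (by push_neg at hu ⊢; linarith), ENNReal.ofReal_zero, mul_zero]
      · rw [gd_of_nonpos hx, ENNReal.ofReal_zero, zero_mul]
    rw [lintegral_congr hz, lintegral_zero, gd_of_nonpos hu, ENNReal.ofReal_zero]

lemma map_add_gamma_gamma {w y : ℝ} (hw : 0 < w) (hy : 0 < y)
    (hB : ∫⁻ t in Ioo (0:ℝ) 1, ENNReal.ofReal (t ^ (w - 1) * (1 - t) ^ (y - 1))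
      = ENNReal.ofReal (Real.Gamma w * Real.Gamma y / Real.Gamma (w + y))) :
    Measure.map (fun p : ℝ × ℝ => p.1 + p.2) ((gammaLaw w).prod (gammaLaw y)) = gammaLaw (w + y) := by
  have hgw : Measurable fun x : ℝ => ENNReal.ofReal (gd w x) := (measurable_gd w).ennreal_ofReal
  refine Measure.ext fun s hs => ?_
  set k : ℝ → ℝ≥0∞ := s.indicator 1 with hk
  have hkm : Measurable k := measurable_one.indicator hs
  rw [Measure.map_apply (f := fun p : ℝ × ℝ => p.1 + p.2) (measurable_fst.add measurable_snd) hs]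
  have hT : MeasurableSet ((fun p : ℝ × ℝ => p.1 + p.2) ⁻¹' s) :=
    hs.preimage (measurable_fst.add measurable_snd)
  rw [gammaLaw_eq w, gammaLaw_eq y, Measure.prod_apply hT,
    lintegral_withDensity_eq_lintegral_mul _ hgw (measurable_measure_prodMk_left hT)]
  have hin : Measurable fun u => k u * ENNReal.ofReal (gd y u) := hkm.mul (measurable_gd y).ennreal_ofReal
  have inner : ∀ x : ℝ,
      (volume.withDensity fun v => ENNReal.ofReal (gd y v))
          (Prod.mk x ⁻¹' ((fun p : ℝ × ℝ => p.1 + p.2) ⁻¹' s))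
        = ∫⁻ u, k u * ENNReal.ofReal (gd y (u - x)) := by
    intro x
    have hpre : Prod.mk x ⁻¹' ((fun p : ℝ × ℝ => p.1 + p.2) ⁻¹' s) = (fun v => x + v) ⁻¹' s := rfl
    have hsx : MeasurableSet ((fun v => x + v) ⁻¹' s) := hs.preimage (measurable_const_add x)
    rw [hpre, withDensity_apply _ hsx, ← lintegral_indicator hsx]
    have h1 : ∀ v, ((fun v => x + v) ⁻¹' s).indicator (fun v => ENNReal.ofReal (gd y v)) v
        = k (x + v) * ENNReal.ofReal (gd y v) := by
      intro v
      by_cases hv : x + v ∈ s <;>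
        simp [hk, Set.indicator_apply, Set.mem_preimage, hv]
    rw [lintegral_congr h1,
      lintegral_translate x (fun u => k u * ENNReal.ofReal (gd y (u - x)))
        (hkm.mul (((measurable_gd y).comp (measurable_id.sub measurable_const)).ennreal_ofReal))]
    refine lintegral_congr fun v => ?_
    rw [add_sub_cancel_right, add_comm]
  have hmy : ∀ x : ℝ, Measurable fun u => k u * ENNReal.ofReal (gd y (u - x)) := fun x =>
    hkm.mul (((measurable_gd y).comp (measurable_id.sub measurable_const)).ennreal_ofReal)
  have step1 : ∀ x : ℝ, ((fun x => ENNReal.ofReal (gd w x)) * fun x =>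
      (volume.withDensity fun v => ENNReal.ofReal (gd y v))
        (Prod.mk x ⁻¹' ((fun p : ℝ × ℝ => p.1 + p.2) ⁻¹' s))) x
      = ∫⁻ u, ENNReal.ofReal (gd w x) * (k u * ENNReal.ofReal (gd y (u - x))) := by
    intro x
    rw [Pi.mul_apply, inner x, ← lintegral_const_mul _ (hmy x)]
  rw [lintegral_congr step1]
  have hmeas : Measurable (Function.uncurry fun x u =>
      ENNReal.ofReal (gd w x) * (k u * ENNReal.ofReal (gd y (u - x)))) := by
    refine Measurable.mul (hgw.comp measurable_fst) ?_
    exact (hkm.comp measurable_snd).mul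
      (((measurable_gd y).comp (measurable_snd.sub measurable_fst)).ennreal_ofReal)
  rw [lintegral_lintegral_swap hmeas.aemeasurable]
  have step2 : ∀ u : ℝ, ∫⁻ x, ENNReal.ofReal (gd w x) * (k u * ENNReal.ofReal (gd y (u - x)))
      = s.indicator (fun u => ENNReal.ofReal (gd (w + y) u)) u := by
    intro u
    have h2 : ∀ x : ℝ, ENNReal.ofReal (gd w x) * (k u * ENNReal.ofReal (gd y (u - x)))
        = k u * (ENNReal.ofReal (gd w x) * ENNReal.ofReal (gd y (u - x))) := fun x => by ring
    have meas2 : Measurable fun x => ENNReal.ofReal (gd w x) * ENNReal.ofReal (gd y (u - x)) :=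
      hgw.mul (((measurable_gd y).comp (measurable_const.sub measurable_id)).ennreal_ofReal)
    rw [lintegral_congr h2, lintegral_const_mul _ meas2, core_add hw hy hB u]
    by_cases hu : u ∈ s <;> simp [hk, Set.indicator_apply, hu]
  rw [lintegral_congr step2, lintegral_indicator hs, gammaLaw_eq, withDensity_apply _ hs]

lemma core_mul {w y : ℝ} (hw : 0 < w) (hy : 0 < y)
    (hΓy : ∫⁻ t in Ioi (0:ℝ), ENNReal.ofReal (t ^ (y - 1) * Real.exp (-t))
      = ENNReal.ofReal (Real.Gamma y)) (u : ℝ) :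
    ∫⁻ a, ENNReal.ofReal (bd w y a * gd (w + y) (a⁻¹ * u) * a⁻¹)
      = ENNReal.ofReal (gd w u) := by
  have hΓw := Real.Gamma_pos_of_pos hw
  have hΓy' := Real.Gamma_pos_of_pos hy
  have hΓwy := Real.Gamma_pos_of_pos (add_pos hw hy)
  by_cases hu : 0 < u
  · have hind : ∀ a : ℝ, ENNReal.ofReal (bd w y a * gd (w + y) (a⁻¹ * u) * a⁻¹)
        = (Ioo (0:ℝ) 1).indicator
            (fun a => ENNReal.ofReal (bd w y a * gd (w + y) (a⁻¹ * u) * a⁻¹)) a := by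
      intro a
      by_cases ha : a ∈ Ioo (0:ℝ) 1
      · rw [indicator_of_mem ha]
      · rw [indicator_of_notMem ha, bd_of_not_mem ha, zero_mul, zero_mul, ENNReal.ofReal_zero]
    rw [lintegral_congr hind, lintegral_indicator measurableSet_Ioo]
    set f : ℝ → ℝ := fun t => u / (u + t) with hf
    set f' : ℝ → ℝ := fun t => -(u / (u + t) ^ 2) with hf'
    have himg : f '' Ioi 0 = Ioo (0:ℝ) 1 := by
      ext b
      constructor
      · rintro ⟨t, ht, rfl⟩
        have ht' : (0:ℝ) < t := ht
        have hp : 0 < u + t := by linarith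
        exact ⟨div_pos hu hp, (div_lt_one hp).mpr (by linarith)⟩
      · intro hb
        refine ⟨u * (1 - b) / b, ?_, ?_⟩
        · have h1 : 0 < u * (1 - b) := mul_pos hu (by linarith [hb.2])
          exact mem_Ioi.mpr (div_pos h1 hb.1)
        · show u / (u + u * (1 - b) / b) = b
          have hb0 := hb.1.ne'
          have hden : u + u * (1 - b) / b = u / b := by
            field_simp; ring
          rw [hden, div_div_eq_mul_div, mul_div_cancel_left₀ b hu.ne']
    have hder : ∀ t ∈ Ioi (0:ℝ), HasDerivWithinAt f (f' t) (Ioi 0) t := by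
      intro t ht
      have ht' : (0:ℝ) < t := ht
      have hp : 0 < u + t := by linarith
      have h1 : HasDerivAt (fun t : ℝ => u + t) 1 t := by
        simpa using (hasDerivAt_id t).const_add u
      have h2 : HasDerivAt (fun t : ℝ => (u + t)⁻¹) (-1 / (u + t) ^ 2) t := by
        exact h1.inv hp.ne'
      have h3 : HasDerivAt (fun t : ℝ => u * (u + t)⁻¹) (u * (-1 / (u + t) ^ 2)) t :=
        h2.const_mul u
      have h4 : HasDerivAt f (f' t) t := by
        have hfe : f = fun z => u * (u + z)⁻¹ := by
          funext z; rw [hf]; exact div_eq_mul_inv u (u + z)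
        rw [hfe, hf']
        convert h3 using 1
        ring
      exact h4.hasDerivWithinAt
    have hinj : InjOn f (Ioi 0) := by
      intro t1 h1 t2 h2 heq
      have ht1 : (0:ℝ) < t1 := h1
      have ht2 : (0:ℝ) < t2 := h2
      have hp1 : 0 < u + t1 := by linarith
      have hp2 : 0 < u + t2 := by linarith
      rw [hf] at heq
      field_simp at heq
      linarith
    rw [← himg, lintegral_image_1d measurableSet_Ioi hder hinj]
    have hpt : ∀ t ∈ Ioi (0:ℝ),
        ENNReal.ofReal |f' t|
          * ENNReal.ofReal (bd w y (f t) * gd (w + y) ((f t)⁻¹ * u) * (f t)⁻¹)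
        = ENNReal.ofReal (u ^ (w - 1) * Real.exp (-u) / (Real.Gamma w * Real.Gamma y))
            * ENNReal.ofReal (t ^ (y - 1) * Real.exp (-t)) := by
      intro t ht
      have ht' : (0:ℝ) < t := ht
      have hp : 0 < u + t := by linarith
      set p : ℝ := u + t with hpdef
      have hfval : f t = u / p := rfl
      have hmem : f t ∈ Ioo (0:ℝ) 1 :=
        ⟨div_pos hu hp, (div_lt_one hp).mpr (by rw [hpdef]; linarith)⟩
      have hfinv : (f t)⁻¹ * u = p := by
        rw [hfval, inv_div, div_mul_cancel₀ _ hu.ne']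
      have habs : |f' t| = u / p ^ 2 := by
        rw [hf', abs_neg, abs_of_pos (by positivity)]
      rw [hfinv, bd_of_mem hmem, gd_of_pos hp, habs, hfval,
        ← ENNReal.ofReal_mul (by positivity), ← ENNReal.ofReal_mul (by positivity)]
      congr 1
      have h1mu : 1 - u / p = t / p := by
        field_simp
        rw [hpdef]; ring
      have e1 : (u / p) ^ (w - 1) = u ^ (w - 1) / p ^ (w - 1) := Real.div_rpow hu.le hp.le _
      have e2 : (t / p) ^ (y - 1) = t ^ (y - 1) / p ^ (y - 1) := Real.div_rpow ht'.le hp.le _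
      have eexp : Real.exp (-p) = Real.exp (-u) * Real.exp (-t) := by
        rw [← Real.exp_add]; congr 1; rw [hpdef]; ring
      have h5 : p ^ (w - 1) * p ^ (y - 1) = p ^ (w + y - 2) := by
        rw [← Real.rpow_add hp]; ring_nf
      have h6 : p ^ (w + y - 2) * p = p ^ (w + y - 1) := by
        rw [← Real.rpow_add_one hp.ne']; ring_nf
      have hpw : (0:ℝ) < p ^ (w - 1) := Real.rpow_pos_of_pos hp _
      have hpy : (0:ℝ) < p ^ (y - 1) := Real.rpow_pos_of_pos hp _
      rw [h1mu, e1, e2, inv_div, eexp, ← h6, ← h5]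
      field_simp
    rw [setLIntegral_congr_fun measurableSet_Ioi hpt,
      lintegral_const_mul _ ((by fun_prop : Measurable fun t : ℝ => t ^ (y-1) * Real.exp (-t)).ennreal_ofReal),
      hΓy, ← ENNReal.ofReal_mul (by positivity), gd_of_pos hu]
    congr 1
    field_simp
  · have hz : ∀ a : ℝ, ENNReal.ofReal (bd w y a * gd (w + y) (a⁻¹ * u) * a⁻¹) = 0 := by
      intro a
      by_cases ha : a ∈ Ioo (0:ℝ) 1
      · have hna : ¬ 0 < a⁻¹ * u := by
          push_neg at hu ⊢
          nlinarith [inv_pos.mpr ha.1]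
        rw [gd_of_nonpos hna, mul_zero, zero_mul, ENNReal.ofReal_zero]
      · rw [bd_of_not_mem ha, zero_mul, zero_mul, ENNReal.ofReal_zero]
    rw [lintegral_congr hz, lintegral_zero, gd_of_nonpos hu, ENNReal.ofReal_zero]

lemma map_mul_beta_gamma {w y : ℝ} (hw : 0 < w) (hy : 0 < y)
    (hΓy : ∫⁻ t in Ioi (0:ℝ), ENNReal.ofReal (t ^ (y - 1) * Real.exp (-t))
      = ENNReal.ofReal (Real.Gamma y)) :
    Measure.map (fun p : ℝ × ℝ => p.1 * p.2) ((betaLaw w y).prod (gammaLaw (w + y)))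
      = gammaLaw w := by
  have hbm : Measurable fun x : ℝ => ENNReal.ofReal (bd w y x) := (measurable_bd w y).ennreal_ofReal
  refine Measure.ext fun s hs => ?_
  set k := s.indicator (1 : ℝ → ℝ≥0∞) with hk
  have hkm : Measurable k := measurable_one.indicator hs
  rw [Measure.map_apply (f := fun p : ℝ × ℝ => p.1 * p.2) (measurable_fst.mul measurable_snd) hs]
  have hT : MeasurableSet ((fun p : ℝ × ℝ => p.1 * p.2) ⁻¹' s) :=
    hs.preimage (measurable_fst.mul measurable_snd)
  rw [betaLaw_eq, gammaLaw_eq (w + y), Measure.prod_apply hT,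
    lintegral_withDensity_eq_lintegral_mul _ hbm (measurable_measure_prodMk_left hT)]
  have measA : ∀ u : ℝ, Measurable fun a : ℝ =>
      ENNReal.ofReal (bd w y a * gd (w + y) (a⁻¹ * u) * a⁻¹) := fun u =>
    (((measurable_bd w y).mul ((measurable_gd (w + y)).comp
      (measurable_inv.mul measurable_const))).mul measurable_inv).ennreal_ofReal
  have step1 : ∀ a : ℝ, ((fun a => ENNReal.ofReal (bd w y a)) * fun a =>
      (volume.withDensity fun v => ENNReal.ofReal (gd (w + y) v))
        (Prod.mk a ⁻¹' ((fun p : ℝ × ℝ => p.1 * p.2) ⁻¹' s))) a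
      = ∫⁻ u, k u * ENNReal.ofReal (bd w y a * gd (w + y) (a⁻¹ * u) * a⁻¹) := by
    intro a
    rw [Pi.mul_apply]
    by_cases ha : a ∈ Ioo (0:ℝ) 1
    case neg =>
      rw [bd_of_not_mem ha, ENNReal.ofReal_zero, zero_mul]
      symm
      refine (lintegral_congr fun u0 => ?_).trans lintegral_zero
      rw [zero_mul, zero_mul, ENNReal.ofReal_zero, mul_zero]
    case pos =>
      have ha0 : 0 < a := ha.1
      have hpre : Prod.mk a ⁻¹' ((fun p : ℝ × ℝ => p.1 * p.2) ⁻¹' s)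
          = (fun v => a * v) ⁻¹' s := rfl
      have hsx : MeasurableSet ((fun v => a * v) ⁻¹' s) := hs.preimage (measurable_const_mul a)
      rw [hpre, withDensity_apply _ hsx, ← lintegral_indicator hsx]
      have h1 : ∀ v, ((fun v => a * v) ⁻¹' s).indicator
          (fun v => ENNReal.ofReal (gd (w + y) v)) v
          = k (a * v) * ENNReal.ofReal (gd (w + y) v) := by
        intro v
        by_cases hv : a * v ∈ s <;> simp [hk, Set.indicator_apply, Set.mem_preimage, hv]
      have hFm : Measurable fun v => k (a * v) * ENNReal.ofReal (gd (w + y) v) :=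
        (hkm.comp (measurable_const_mul a)).mul (measurable_gd (w + y)).ennreal_ofReal
      rw [lintegral_congr h1, lintegral_scale (inv_pos.mpr ha0) _ hFm]
      have h2 : ∀ x : ℝ, k (a * (a⁻¹ * x)) * ENNReal.ofReal (gd (w + y) (a⁻¹ * x))
          = k x * ENNReal.ofReal (gd (w + y) (a⁻¹ * x)) := by
        intro x; rw [mul_inv_cancel_left₀ ha0.ne']
      have meas3 : Measurable fun x => k x * ENNReal.ofReal (gd (w + y) (a⁻¹ * x)) :=
        hkm.mul (((measurable_gd (w + y)).comp (measurable_const_mul a⁻¹)).ennreal_ofReal)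
      have meas4 : Measurable fun x => ENNReal.ofReal a⁻¹
          * (k x * ENNReal.ofReal (gd (w + y) (a⁻¹ * x))) := measurable_const.mul meas3
      rw [lintegral_congr h2, ← lintegral_const_mul _ meas3, ← lintegral_const_mul _ meas4]
      refine lintegral_congr fun x => ?_
      rw [ENNReal.ofReal_mul (mul_nonneg (bd_nonneg hw hy a) (gd_nonneg (add_pos hw hy) _)),
        ENNReal.ofReal_mul (bd_nonneg hw hy a)]
      ring
  rw [lintegral_congr step1]
  have hmeas : Measurable (Function.uncurry fun a u =>
      k u * ENNReal.ofReal (bd w y a * gd (w + y) (a⁻¹ * u) * a⁻¹)) := by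
    refine Measurable.mul (hkm.comp measurable_snd) ?_
    exact ((((measurable_bd w y).comp measurable_fst).mul ((measurable_gd (w + y)).comp
      ((measurable_fst.inv).mul measurable_snd))).mul measurable_fst.inv).ennreal_ofReal
  rw [lintegral_lintegral_swap hmeas.aemeasurable]
  have step2 : ∀ u : ℝ, ∫⁻ a, k u * ENNReal.ofReal (bd w y a * gd (w + y) (a⁻¹ * u) * a⁻¹)
      = s.indicator (fun u => ENNReal.ofReal (gd w u)) u := by
    intro u
    rw [lintegral_const_mul _ (measA u), core_mul hw hy hΓy u]
    by_cases hu : u ∈ s <;> simp [hk, Set.indicator_apply, hu]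
  rw [lintegral_congr step2, lintegral_indicator hs, gammaLaw_eq, withDensity_apply _ hs]

end StmtAux

theorem stmt_10 {Ω : Type*} [MeasurableSpace Ω] (P : Measure Ω) [IsProbabilityMeasure P]
    (w y : ℝ) (hw : 0 < w) (hy : 0 < y)
    (A V₁ V₂ : Ω → ℝ) (hA : Measurable A) (hV₁ : Measurable V₁) (hV₂ : Measurable V₂)
    (hAlaw : Measure.map A P = betaLaw w y)
    (hV₁law : Measure.map V₁ P = gammaLaw (w + y))
    (hV₂law : Measure.map V₂ P = gammaLaw y)
    (hind : iIndepFun ![A, V₁, V₂] P) :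
    Measure.map (fun ω => A ω * V₁ ω + V₂ ω) P = gammaLaw (w + y) := by
  have hABm : Measurable fun ω => A ω * V₁ ω := hA.mul hV₁
  have hbP : IsProbabilityMeasure (betaLaw w y) := hAlaw ▸ Measure.isProbabilityMeasure_map hA.aemeasurable
  have hgP2 : IsProbabilityMeasure (gammaLaw y) := hV₂law ▸ Measure.isProbabilityMeasure_map hV₂.aemeasurable
  have hΓy : ∫⁻ t in Set.Ioi (0:ℝ), ENNReal.ofReal (t ^ (y - 1) * Real.exp (-t))
      = ENNReal.ofReal (Real.Gamma y) := StmtAux.gamma_mass hy hgP2.measure_univ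
  have hB : ∫⁻ t in Set.Ioo (0:ℝ) 1, ENNReal.ofReal (t ^ (w - 1) * (1 - t) ^ (y - 1))
      = ENNReal.ofReal (Real.Gamma w * Real.Gamma y / Real.Gamma (w + y)) :=
    StmtAux.beta_mass hw hy hbP.measure_univ
  have hAV : IndepFun A V₁ P := by
    have h := hind.indepFun (i := 0) (j := 1) (by decide)
    simpa using h
  have hmapPair : Measure.map (fun ω => (A ω, V₁ ω)) P = (betaLaw w y).prod (gammaLaw (w + y)) := by
    rw [← hAlaw, ← hV₁law]
    exact (indepFun_iff_map_prod_eq_prod_map_map hA.aemeasurable hV₁.aemeasurable).mp hAV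
  have hmul : Measure.map (fun ω => A ω * V₁ ω) P = gammaLaw w := by
    have hcomp : (fun ω => A ω * V₁ ω)
        = (fun p : ℝ × ℝ => p.1 * p.2) ∘ fun ω => (A ω, V₁ ω) := rfl
    rw [hcomp, ← Measure.map_map (g := fun p : ℝ × ℝ => p.1 * p.2) (measurable_fst.mul measurable_snd) (hA.prodMk hV₁), hmapPair]
    exact StmtAux.map_mul_beta_gamma hw hy hΓy
  have hAVind : IndepFun (fun ω => A ω * V₁ ω) V₂ P := by
    have h := hind.indepFun_mul_left (fun i => by fin_cases i <;> assumption) 0 1 2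
      (by decide) (by decide)
    exact h
  have hmapPair2 : Measure.map (fun ω => (A ω * V₁ ω, V₂ ω)) P
      = (gammaLaw w).prod (gammaLaw y) := by
    rw [← hmul, ← hV₂law]
    exact (indepFun_iff_map_prod_eq_prod_map_map hABm.aemeasurable hV₂.aemeasurable).mp hAVind
  have hcomp2 : (fun ω => A ω * V₁ ω + V₂ ω)
      = (fun p : ℝ × ℝ => p.1 + p.2) ∘ fun ω => (A ω * V₁ ω, V₂ ω) := rfl
  rw [hcomp2, ← Measure.map_map (g := fun p : ℝ × ℝ => p.1 + p.2) (measurable_fst.add measurable_snd) (hABm.prodMk hV₂), hmapPair2]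
  exact StmtAux.map_add_gamma_gamma hw hy hB
end

section
/- Let p ∈ (0,1). Let A ~ Uniform[p, 1], let B ~ Bernoulli(1-p), and let V₁ ~ Gamma(2, 1), V₂ ~ Gamma(1, 1) (standard exponential), all mutually independent. Then A·V₁ + B·V₂ has distribution Gamma(2, 1). -/
open MeasureTheory ProbabilityTheory Set

open scoped ENNReal

noncomputable def auxF1 (t : ℝ) : ℝ := if 0 ≤ t then 1 - Real.exp (-t) else 0
noncomputable def auxF2 (t : ℝ) : ℝ := if 0 ≤ t then 1 - Real.exp (-t) * (1 + t) else 0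

lemma gammaLaw_eq_gammaMeasure (a : ℝ) : gammaLaw a = gammaMeasure a 1 := by
  unfold gammaLaw gammaMeasure
  apply withDensity_congr_ae
  have h0 : ∀ᵐ (x : ℝ) ∂volume, x ≠ 0 := by
    rw [MeasureTheory.ae_iff]
    simp only [not_not]
    rw [show {x : ℝ | x = 0} = {0} from Set.setOf_eq_eq_singleton]
    exact measure_singleton 0
  filter_upwards [h0] with x hx
  rcases lt_trichotomy x 0 with h | h | h
  · rw [if_neg (by linarith), gammaPDF_of_neg h]; simp
  · exact absurd h hx
  · rw [if_pos h, gammaPDF_of_nonneg h.le]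
    congr 1
    rw [Real.one_rpow]
    ring_nf

lemma isProbabilityMeasure_gammaLaw {a : ℝ} (ha : 0 < a) :
    IsProbabilityMeasure (gammaLaw a) := by
  rw [gammaLaw_eq_gammaMeasure]
  exact isProbabilityMeasure_gammaMeasure ha one_pos

lemma measurable_auxF1 : Measurable auxF1 := by
  unfold auxF1; exact Measurable.ite measurableSet_Ici (by fun_prop) measurable_const

lemma measurable_auxF2 : Measurable auxF2 := by
  unfold auxF2; exact Measurable.ite measurableSet_Ici (by fun_prop) measurable_const

lemma auxF1_nonneg (t : ℝ) : 0 ≤ auxF1 t := by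
  unfold auxF1; split_ifs with h
  · simp [Real.exp_le_one_iff.mpr (by linarith : -t ≤ 0)]
  · exact le_refl 0

lemma gammaLaw_one_Iic (t : ℝ) :
    gammaLaw 1 (Iic t) = ENNReal.ofReal (auxF1 t) := by
  rw [gammaLaw, withDensity_apply _ measurableSet_Iic]
  have hfun : ∀ x : ℝ, ENNReal.ofReal (if 0 < x then x ^ ((1:ℝ) - 1) * Real.exp (-x) / Real.Gamma 1 else 0)
      = (Ioi (0:ℝ)).indicator (fun x => ENNReal.ofReal (Real.exp (-x))) x := by
    intro x
    by_cases h : 0 < x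
    · simp [h, Set.indicator_of_mem (Set.mem_Ioi.mpr h), Real.Gamma_one, Real.rpow_zero]
    · simp [h, Set.indicator_of_notMem (fun hx => h (Set.mem_Ioi.mp hx))]
  simp_rw [hfun]
  rw [lintegral_indicator measurableSet_Ioi, Measure.restrict_restrict measurableSet_Ioi,
    Set.Ioi_inter_Iic]
  rcases le_or_gt 0 t with ht | ht
  · rw [← ofReal_integral_eq_lintegral_ofReal
      ((Continuous.integrableOn_Ioc (by fun_prop)))
      (ae_of_all _ fun x => (Real.exp_pos _).le)]
    rw [← intervalIntegral.integral_of_le ht]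
    have : ∫ x in (0:ℝ)..t, Real.exp (-x) = 1 - Real.exp (-t) := by
      have hderiv : ∀ x ∈ Set.uIcc (0:ℝ) t, HasDerivAt (fun y => -Real.exp (-y)) (Real.exp (-x)) x := by
        intro x _
        exact ((hasDerivAt_neg x).exp).neg.congr_deriv (by ring)
      rw [intervalIntegral.integral_eq_sub_of_hasDerivAt hderiv
        ((Continuous.intervalIntegrable (by fun_prop) _ _))]
      simp only [neg_zero, Real.exp_zero]
      ring
    rw [this, auxF1, if_pos ht]
  · rw [Set.Ioc_eq_empty (by linarith), Measure.restrict_empty, lintegral_zero_measure,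
      auxF1, if_neg (by linarith), ENNReal.ofReal_zero]

lemma gammaLaw_two_Iic (t : ℝ) :
    gammaLaw 2 (Iic t) = ENNReal.ofReal (auxF2 t) := by
  rw [gammaLaw, withDensity_apply _ measurableSet_Iic]
  have hfun : ∀ x : ℝ, ENNReal.ofReal (if 0 < x then x ^ ((2:ℝ) - 1) * Real.exp (-x) / Real.Gamma 2 else 0)
      = (Ioi (0:ℝ)).indicator (fun x => ENNReal.ofReal (x * Real.exp (-x))) x := by
    intro x
    by_cases h : 0 < x
    · simp only [if_pos h, Set.indicator_of_mem (Set.mem_Ioi.mpr h)]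
      norm_num [Real.Gamma_two, Real.rpow_one]
    · simp [h, Set.indicator_of_notMem (fun hx => h (Set.mem_Ioi.mp hx))]
  simp_rw [hfun]
  rw [lintegral_indicator measurableSet_Ioi, Measure.restrict_restrict measurableSet_Ioi,
    Set.Ioi_inter_Iic]
  rcases le_or_gt 0 t with ht | ht
  · rw [← ofReal_integral_eq_lintegral_ofReal
      ((Continuous.integrableOn_Ioc (by fun_prop)))
      ((ae_restrict_iff' measurableSet_Ioc).mpr (ae_of_all _ fun x hx => ?_))]
    · rw [← intervalIntegral.integral_of_le ht]
      have : ∫ x in (0:ℝ)..t, x * Real.exp (-x) = 1 - Real.exp (-t) * (1 + t) := by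
        have hderiv : ∀ x ∈ Set.uIcc (0:ℝ) t,
            HasDerivAt (fun y => -((1+y) * Real.exp (-y))) (x * Real.exp (-x)) x := by
          intro x _
          have h1 : HasDerivAt (fun y : ℝ => 1 + y) 1 x := by
            simpa using (hasDerivAt_id x).const_add 1
          have h2 : HasDerivAt (fun y : ℝ => Real.exp (-y)) (-Real.exp (-x)) x := by
            simpa using (hasDerivAt_neg x).exp
          have := (h1.mul h2).neg
          refine this.congr_deriv ?_
          ring
        rw [intervalIntegral.integral_eq_sub_of_hasDerivAt hderiv
          ((Continuous.intervalIntegrable (by fun_prop) _ _))]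
        simp; ring
      rw [this, auxF2, if_pos ht]
    · have hx0 : (0:ℝ) ≤ x := hx.1.le
      positivity
  · rw [Set.Ioc_eq_empty (by linarith), Measure.restrict_empty, lintegral_zero_measure,
      auxF2, if_neg (by linarith), ENNReal.ofReal_zero]

noncomputable def auxLr (p t : ℝ) : ℝ :=
  if 0 ≤ t then ((1 - p) - Real.exp (-t) + p * Real.exp (-(t/p))) / (1 - p) else 0

lemma isProbabilityMeasure_uniformLaw {p : ℝ} (hp1 : p < 1) :
    IsProbabilityMeasure (uniformLaw p 1) := by
  constructor
  rw [uniformLaw, withDensity_apply _ MeasurableSet.univ, Measure.restrict_univ]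
  have hfun : ∀ x : ℝ, ENNReal.ofReal (if x ∈ Set.Icc p 1 then 1 / (1 - p) else 0)
      = (Set.Icc p 1).indicator (fun _ => ENNReal.ofReal (1 / (1 - p))) x := by
    intro x; by_cases h : x ∈ Set.Icc p 1 <;> simp [h]
  have h1p : (0:ℝ) < 1 - p := by linarith
  simp_rw [hfun]
  rw [lintegral_indicator measurableSet_Icc, setLIntegral_const, Real.volume_Icc,
    ← ENNReal.ofReal_mul (one_div_nonneg.mpr h1p.le)]
  rw [show 1 / (1 - p) * (1 - p) = 1 by field_simp]
  exact ENNReal.ofReal_one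

lemma isProbabilityMeasure_bernoulliLaw {p : ℝ} (hp0 : 0 ≤ p) (hp1 : p ≤ 1) :
    IsProbabilityMeasure (bernoulliLaw p) := by
  constructor
  simp only [bernoulliLaw, Measure.add_apply, Measure.smul_apply, smul_eq_mul,
    measure_univ, mul_one]
  rw [← ENNReal.ofReal_add hp0 (by linarith), show p + (1 - p) = 1 by ring, ENNReal.ofReal_one]

lemma auxLr_nonneg {p : ℝ} (hp0 : 0 < p) (hp1 : p < 1) (t : ℝ) : 0 ≤ auxLr p t := by
  unfold auxLr
  split_ifs with ht
  · have hconj : (1/p).HolderConjugate (1/(1-p)) := by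
      rw [Real.holderConjugate_iff]; constructor
      · rw [lt_div_iff₀ hp0]; linarith
      · rw [one_div, inv_inv, one_div, inv_inv]; ring
    have hy := Real.young_inequality_of_nonneg (Real.exp_pos (-t)).le zero_le_one hconj
    rw [Real.one_rpow, mul_one] at hy
    have hrw : Real.exp (-t) ^ (1/p) = Real.exp (-(t/p)) := by
      rw [← Real.exp_mul]; congr 1; field_simp
    rw [hrw] at hy
    have h1 : Real.exp (-(t/p)) / (1/p) = p * Real.exp (-(t/p)) := by field_simp
    have h2 : (1:ℝ) / (1/(1-p)) = 1 - p := by field_simp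
    rw [h1, h2] at hy
    have h : 0 ≤ (1 - p) - Real.exp (-t) + p * Real.exp (-(t/p)) := by linarith
    exact div_nonneg h (by linarith)
  · exact le_refl 0

lemma auxF2_nonneg (t : ℝ) : 0 ≤ auxF2 t := by
  unfold auxF2
  split_ifs with ht
  · have h := Real.add_one_le_exp t
    have hmul : Real.exp (-t) * Real.exp t = 1 := by rw [← Real.exp_add]; simp
    nlinarith [Real.exp_pos (-t), mul_le_mul_of_nonneg_left h (Real.exp_pos (-t)).le]
  · exact le_refl 0

lemma auxL_eq {p : ℝ} (hp0 : 0 < p) (hp1 : p < 1) (q : ℝ) :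
    ((uniformLaw p 1).prod (gammaLaw 2)) {x : ℝ × ℝ | x.1 * x.2 ≤ q}
      = ENNReal.ofReal (auxLr p q) := by
  haveI := isProbabilityMeasure_uniformLaw hp1
  haveI := isProbabilityMeasure_gammaLaw (show (0:ℝ) < 2 by norm_num)
  have hple : p ≤ 1 := hp1.le
  have h1p : (0:ℝ) < 1 - p := by linarith
  have hs : MeasurableSet {x : ℝ × ℝ | x.1 * x.2 ≤ q} :=
    measurableSet_le (by fun_prop) measurable_const
  rw [Measure.prod_apply hs]
  -- a.e. a ∈ Icc p 1 under the uniform law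
  have hU : ∀ᵐ a ∂(uniformLaw p 1), a ∈ Icc p 1 := by
    rw [MeasureTheory.ae_iff]
    have hcset : {a : ℝ | ¬ a ∈ Icc p 1} = (Icc p 1)ᶜ := rfl
    rw [hcset, uniformLaw, withDensity_apply _ measurableSet_Icc.compl]
    rw [setLIntegral_congr_fun_ae measurableSet_Icc.compl
      (ae_of_all _ (fun a (ha : a ∈ (Icc p 1)ᶜ) => by
        simp only [Set.mem_compl_iff] at ha
        rw [if_neg (by simpa using ha), ENNReal.ofReal_zero]))]
    simp
  have hcong : ∀ᵐ a ∂(uniformLaw p 1),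
      gammaLaw 2 (Prod.mk a ⁻¹' {x : ℝ × ℝ | x.1 * x.2 ≤ q})
        = ENNReal.ofReal (auxF2 (q / a)) := by
    filter_upwards [hU] with a ha
    have ha0 : 0 < a := lt_of_lt_of_le hp0 ha.1
    have hset : Prod.mk a ⁻¹' {x : ℝ × ℝ | x.1 * x.2 ≤ q} = Iic (q / a) := by
      ext v
      simp only [Set.mem_preimage, Set.mem_setOf_eq, Set.mem_Iic]
      rw [le_div_iff₀ ha0, mul_comm]
    rw [hset, gammaLaw_two_Iic]
  rw [lintegral_congr_ae hcong]
  rw [uniformLaw, lintegral_withDensity_eq_lintegral_mul _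
    (show Measurable fun x : ℝ => ENNReal.ofReal (if x ∈ Set.Icc p 1 then 1 / (1 - p) else 0) from
      (Measurable.ite measurableSet_Icc measurable_const measurable_const).ennreal_ofReal)
    (show Measurable fun a : ℝ => ENNReal.ofReal (auxF2 (q / a)) from
      (measurable_auxF2.comp (measurable_const.div measurable_id)).ennreal_ofReal)]
  have hfun : ∀ a : ℝ,
      ENNReal.ofReal (if a ∈ Set.Icc p 1 then 1 / (1 - p) else 0) * ENNReal.ofReal (auxF2 (q / a))
        = (Icc p 1).indicator (fun a => ENNReal.ofReal (1 / (1 - p) * auxF2 (q / a))) a := by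
    intro a
    by_cases h : a ∈ Icc p 1
    · rw [Set.indicator_of_mem h, if_pos h, ← ENNReal.ofReal_mul (one_div_nonneg.mpr h1p.le)]
    · rw [Set.indicator_of_notMem h, if_neg h, ENNReal.ofReal_zero, zero_mul]
  simp only [Pi.mul_apply]
  rw [lintegral_congr hfun, lintegral_indicator measurableSet_Icc]
  rcases le_or_gt 0 q with hq | hq
  · -- main case
    rw [setLIntegral_congr_fun_ae measurableSet_Icc (ae_of_all _ (fun a (ha : a ∈ Icc p 1) => by
      have ha0 : 0 < a := lt_of_lt_of_le hp0 ha.1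
      rw [auxF2, if_pos (div_nonneg hq ha0.le)]))]
    have hdiv : ContinuousOn (fun a : ℝ => q / a) (Icc p 1) :=
      continuousOn_const.div continuousOn_id (fun a ha => ne_of_gt (lt_of_lt_of_le hp0 ha.1))
    have hcont : ContinuousOn
        (fun a : ℝ => 1 / (1 - p) * (1 - Real.exp (-(q / a)) * (1 + q / a))) (Icc p 1) :=
      continuousOn_const.mul (continuousOn_const.sub
        ((Real.continuous_exp.comp_continuousOn hdiv.neg).mul (continuousOn_const.add hdiv)))
    rw [← ofReal_integral_eq_lintegral_ofReal (hcont.integrableOn_Icc)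
      ((ae_restrict_iff' measurableSet_Icc).mpr (ae_of_all _ fun a ha => by
        have ha0 : 0 < a := lt_of_lt_of_le hp0 ha.1
        have h2 := auxF2_nonneg (q / a)
        rw [auxF2, if_pos (div_nonneg hq ha0.le)] at h2
        positivity))]
    congr 1
    rw [MeasureTheory.integral_Icc_eq_integral_Ioc, ← intervalIntegral.integral_of_le hple]
    have hderiv : ∀ a ∈ Set.uIcc p 1,
        HasDerivAt (fun a : ℝ => 1 / (1 - p) * (a - a * Real.exp (-(q / a))))
          (1 / (1 - p) * (1 - Real.exp (-(q / a)) * (1 + q / a))) a := by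
      intro a ha
      rw [Set.uIcc_of_le hple] at ha
      have ha0 : 0 < a := lt_of_lt_of_le hp0 ha.1
      have hd1 : HasDerivAt (fun a : ℝ => q / a) ((0 * a - q * 1) / a ^ 2) a :=
        (hasDerivAt_const a q).div (hasDerivAt_id a) ha0.ne'
      have hd2 : HasDerivAt (fun a : ℝ => Real.exp (-(q / a)))
          (Real.exp (-(q / a)) * (-((0 * a - q * 1) / a ^ 2))) a := hd1.neg.exp
      have hd3 := ((hasDerivAt_id a).mul hd2)
      have hd4 := ((hasDerivAt_id a).sub hd3).const_mul (1 / (1 - p))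
      refine hd4.congr_deriv ?_
      simp only [id_eq]
      field_simp
      ring
    rw [intervalIntegral.integral_eq_sub_of_hasDerivAt hderiv
      ((hcont.mono (by rw [Set.uIcc_of_le hple])).intervalIntegrable)]
    rw [auxLr, if_pos hq]
    rw [div_one]
    field_simp
    ring
  · -- q < 0 : everything vanishes
    rw [setLIntegral_congr_fun_ae measurableSet_Icc (ae_of_all _ (fun a (ha : a ∈ Icc p 1) => by
      have ha0 : 0 < a := lt_of_lt_of_le hp0 ha.1
      rw [auxF2, if_neg (by
        rw [not_le]
        exact div_neg_of_neg_of_pos hq ha0), mul_zero, ENNReal.ofReal_zero]))]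
    rw [lintegral_zero, auxLr, if_neg (not_le.mpr hq), ENNReal.ofReal_zero]

noncomputable def auxMr (p t : ℝ) : ℝ :=
  if 0 ≤ t then
    ((1 - p) * (1 - Real.exp (-t)) - t * Real.exp (-t)
      + (p^2/(1-p)) * (Real.exp (-t) - Real.exp (-(t/p)))) / (1 - p)
  else 0

lemma measurable_auxLr (p : ℝ) : Measurable (auxLr p) := by
  unfold auxLr
  exact Measurable.ite measurableSet_Ici (by fun_prop) measurable_const

lemma auxMr_key {p : ℝ} (hp0 : 0 < p) (hp1 : p < 1) {q : ℝ} (hq : 0 ≤ q) :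
    ∫ w in (0:ℝ)..q,
        Real.exp (-w) * (((1 - p) - Real.exp (-(q - w)) + p * Real.exp (-((q - w)/p))) / (1 - p))
      = auxMr p q := by
  have h1p : (0:ℝ) < 1 - p := by linarith
  have hderiv : ∀ w ∈ Set.uIcc (0:ℝ) q,
      HasDerivAt (fun w : ℝ => (-(1-p) * Real.exp (-w) - w * Real.exp (-q)
          + (p^2/(1-p)) * Real.exp (-((q - w)/p) - w)) / (1 - p))
        (Real.exp (-w) * (((1 - p) - Real.exp (-(q - w)) + p * Real.exp (-((q - w)/p))) / (1 - p)))
        w := by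
    intro w _
    have e1 : HasDerivAt (fun w : ℝ => Real.exp (-w)) (-Real.exp (-w)) w := by
      simpa using (hasDerivAt_neg w).exp
    have e2 : HasDerivAt (fun w : ℝ => w * Real.exp (-q)) (Real.exp (-q)) w :=
      hasDerivAt_mul_const _
    have e3inner : HasDerivAt (fun w : ℝ => -((q - w)/p) - w) (-((0 - 1)/p) - 1) w := by
      exact ((((hasDerivAt_const w q).sub (hasDerivAt_id w)).div_const p).neg).sub
        (hasDerivAt_id w)
    have e3 : HasDerivAt (fun w : ℝ => Real.exp (-((q - w)/p) - w))
        (Real.exp (-((q - w)/p) - w) * (-((0 - 1)/p) - 1)) w := e3inner.exp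
    have total := (((e1.const_mul (-(1-p))).sub e2).add (e3.const_mul (p^2/(1-p)))).div_const (1-p)
    refine total.congr_deriv ?_
    have hexp : Real.exp (-((q - w)/p) - w) = Real.exp (-w) * Real.exp (-((q - w)/p)) := by
      rw [← Real.exp_add]; ring_nf
    have h2 : Real.exp (-(q - w)) = Real.exp (-q) / Real.exp (-w) := by
      rw [eq_div_iff (Real.exp_ne_zero _), ← Real.exp_add]; ring_nf
    rw [hexp, h2]
    field_simp
    ring
  rw [intervalIntegral.integral_eq_sub_of_hasDerivAt hderiv
    (Continuous.intervalIntegrable (by fun_prop) _ _)]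
  rw [auxMr, if_pos hq]
  rw [show -((q - q)/p) - q = -q by simp, show -((q - 0)/p) - (0:ℝ) = -(q/p) by ring]
  simp only [neg_zero, Real.exp_zero]
  field_simp
  ring

lemma auxMr_nonneg {p : ℝ} (hp0 : 0 < p) (hp1 : p < 1) (q : ℝ) : 0 ≤ auxMr p q := by
  rcases le_or_gt 0 q with hq | hq
  · rw [← auxMr_key hp0 hp1 hq]
    apply intervalIntegral.integral_nonneg hq
    intro w hw
    have h := auxLr_nonneg hp0 hp1 (q - w)
    rw [auxLr, if_pos (by linarith [hw.2] : 0 ≤ q - w)] at h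
    exact mul_nonneg (Real.exp_pos _).le h
  · rw [auxMr, if_neg (not_le.mpr hq)]

lemma auxM_eq {p : ℝ} (hp0 : 0 < p) (hp1 : p < 1) (q : ℝ) :
    ∫⁻ w, ENNReal.ofReal (auxLr p (q - w)) ∂(gammaLaw 1) = ENNReal.ofReal (auxMr p q) := by
  have h1p : (0:ℝ) < 1 - p := by linarith
  rw [gammaLaw, lintegral_withDensity_eq_lintegral_mul _
    (show Measurable fun x : ℝ =>
        ENNReal.ofReal (if 0 < x then x ^ ((1:ℝ) - 1) * Real.exp (-x) / Real.Gamma 1 else 0) from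
      (Measurable.ite measurableSet_Ioi (by fun_prop) measurable_const).ennreal_ofReal)
    (show Measurable fun w : ℝ => ENNReal.ofReal (auxLr p (q - w)) from
      ((measurable_auxLr p).comp (measurable_const.sub measurable_id)).ennreal_ofReal)]
  have hfun : ∀ w : ℝ,
      (ENNReal.ofReal (if 0 < w then w ^ ((1:ℝ) - 1) * Real.exp (-w) / Real.Gamma 1 else 0)
        * ENNReal.ofReal (auxLr p (q - w)))
      = (Ioi (0:ℝ)).indicator (fun w => ENNReal.ofReal (Real.exp (-w) * auxLr p (q - w))) w := by
    intro w
    by_cases h : 0 < w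
    · rw [Set.indicator_of_mem (Set.mem_Ioi.mpr h), if_pos h]
      rw [Real.Gamma_one, show ((1:ℝ) - 1) = 0 from by norm_num, Real.rpow_zero, one_mul, div_one,
        ENNReal.ofReal_mul (Real.exp_pos _).le]
    · rw [Set.indicator_of_notMem (fun hx => h (Set.mem_Ioi.mp hx)), if_neg h,
        ENNReal.ofReal_zero, zero_mul]
  simp only [Pi.mul_apply]
  rw [lintegral_congr hfun, lintegral_indicator measurableSet_Ioi]
  rcases le_or_gt 0 q with hq | hq
  · have hindic : ∀ w ∈ Ioi (0:ℝ),
        ENNReal.ofReal (Real.exp (-w) * auxLr p (q - w))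
          = (Ioc (0:ℝ) q).indicator
              (fun w => ENNReal.ofReal (Real.exp (-w) * auxLr p (q - w))) w := by
      intro w hw
      by_cases hwq : w ≤ q
      · rw [Set.indicator_of_mem (Set.mem_Ioc.mpr ⟨Set.mem_Ioi.mp hw, hwq⟩)]
      · rw [Set.indicator_of_notMem (fun hmem => hwq hmem.2)]
        rw [auxLr, if_neg (by push_neg at hwq ⊢; linarith), mul_zero, ENNReal.ofReal_zero]
    rw [setLIntegral_congr_fun_ae measurableSet_Ioi (ae_of_all _ hindic),
      lintegral_indicator measurableSet_Ioc, Measure.restrict_restrict measurableSet_Ioc,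
      Set.inter_eq_self_of_subset_left Set.Ioc_subset_Ioi_self]
    rw [setLIntegral_congr_fun_ae measurableSet_Ioc (ae_of_all _ (fun w (hw : w ∈ Ioc 0 q) => by
      rw [auxLr, if_pos (by linarith [hw.2])]))]
    rw [← ofReal_integral_eq_lintegral_ofReal
      (Continuous.integrableOn_Ioc (by fun_prop))
      ((ae_restrict_iff' measurableSet_Ioc).mpr (ae_of_all _ (fun w hw => by
        have h := auxLr_nonneg hp0 hp1 (q - w)
        rw [auxLr, if_pos (by linarith [hw.2])] at h
        exact mul_nonneg (Real.exp_pos _).le h)))]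
    rw [← intervalIntegral.integral_of_le hq, auxMr_key hp0 hp1 hq]
  · rw [setLIntegral_congr_fun_ae measurableSet_Ioi (ae_of_all _ (fun w (hw : w ∈ Ioi 0) => by
      rw [auxLr, if_neg (by simp only [mem_Ioi] at hw; push_neg; linarith), mul_zero,
        ENNReal.ofReal_zero]))]
    rw [lintegral_zero, auxMr, if_neg (not_le.mpr hq), ENNReal.ofReal_zero]

lemma aux_combine {p : ℝ} (hp0 : 0 < p) (hp1 : p < 1) (q : ℝ) :
    (1 - p) * auxMr p q + p * auxLr p q = auxF2 q := by
  have h1p : (0:ℝ) < 1 - p := by linarith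
  unfold auxMr auxLr auxF2
  split_ifs with hq
  · field_simp
    ring
  · ring

lemma ber_section {p : ℝ} (hp0 : 0 < p) (hp1 : p < 1) (q c : ℝ) :
    ((bernoulliLaw (1 - p)).prod (gammaLaw 1)) {y : ℝ × ℝ | c + y.1 * y.2 ≤ q}
      = ENNReal.ofReal (1 - p) * ENNReal.ofReal (auxF1 (q - c))
        + ENNReal.ofReal p * (Iic q).indicator (fun _ => 1) c := by
  haveI := isProbabilityMeasure_gammaLaw (show (0:ℝ) < 1 by norm_num)
  have hset : MeasurableSet {y : ℝ × ℝ | c + y.1 * y.2 ≤ q} :=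
    measurableSet_le (by fun_prop) measurable_const
  rw [Measure.prod_apply hset, bernoulliLaw, lintegral_add_measure, lintegral_smul_measure,
    lintegral_smul_measure, lintegral_dirac, lintegral_dirac]
  have hs1 : Prod.mk (1:ℝ) ⁻¹' {y : ℝ × ℝ | c + y.1 * y.2 ≤ q} = Iic (q - c) := by
    ext w
    simp only [Set.mem_preimage, Set.mem_setOf_eq, Set.mem_Iic, one_mul]
    constructor <;> intro <;> linarith
  rw [hs1, gammaLaw_one_Iic]
  have hs0 : Prod.mk (0:ℝ) ⁻¹' {y : ℝ × ℝ | c + y.1 * y.2 ≤ q} = {w : ℝ | c ≤ q} := by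
    ext w; simp
  rw [hs0]
  congr 1
  rw [show (1:ℝ) - (1 - p) = p by ring]
  congr 1
  by_cases hc : c ≤ q
  · rw [show {w : ℝ | c ≤ q} = (univ : Set ℝ) from by ext w; simp [hc], measure_univ,
      Set.indicator_of_mem (Set.mem_Iic.mpr hc)]
  · rw [show {w : ℝ | c ≤ q} = (∅ : Set ℝ) from by ext w; simp [hc], measure_empty,
      Set.indicator_of_notMem (fun h => hc (Set.mem_Iic.mp h))]

lemma auxMM_eq {p : ℝ} (hp0 : 0 < p) (hp1 : p < 1) (q : ℝ) :
    ∫⁻ x, ENNReal.ofReal (auxF1 (q - x.1 * x.2)) ∂((uniformLaw p 1).prod (gammaLaw 2))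
      = ENNReal.ofReal (auxMr p q) := by
  haveI := isProbabilityMeasure_uniformLaw hp1
  haveI := isProbabilityMeasure_gammaLaw (show (0:ℝ) < 2 by norm_num)
  haveI := isProbabilityMeasure_gammaLaw (show (0:ℝ) < 1 by norm_num)
  have hT : MeasurableSet {z : (ℝ × ℝ) × ℝ | z.1.1 * z.1.2 + z.2 ≤ q} :=
    measurableSet_le (by fun_prop) measurable_const
  have h1 : ∀ x : ℝ × ℝ, ENNReal.ofReal (auxF1 (q - x.1 * x.2))
      = gammaLaw 1 (Prod.mk x ⁻¹' {z : (ℝ × ℝ) × ℝ | z.1.1 * z.1.2 + z.2 ≤ q}) := by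
    intro x
    have : Prod.mk x ⁻¹' {z : (ℝ × ℝ) × ℝ | z.1.1 * z.1.2 + z.2 ≤ q} = Iic (q - x.1 * x.2) := by
      ext w
      simp only [Set.mem_preimage, Set.mem_setOf_eq, Set.mem_Iic]
      constructor <;> intro <;> linarith
    rw [this, gammaLaw_one_Iic]
  rw [lintegral_congr h1, ← Measure.prod_apply hT, Measure.prod_apply_symm hT]
  have h2 : ∀ w : ℝ,
      ((uniformLaw p 1).prod (gammaLaw 2)) ((fun x => (x, w)) ⁻¹' {z : (ℝ × ℝ) × ℝ | z.1.1 * z.1.2 + z.2 ≤ q})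
        = ENNReal.ofReal (auxLr p (q - w)) := by
    intro w
    have : ((fun x => (x, w)) ⁻¹' {z : (ℝ × ℝ) × ℝ | z.1.1 * z.1.2 + z.2 ≤ q})
        = {x : ℝ × ℝ | x.1 * x.2 ≤ q - w} := by
      ext x
      simp only [Set.mem_preimage, Set.mem_setOf_eq]
      constructor <;> intro <;> linarith
    rw [this, auxL_eq hp0 hp1]
  rw [lintegral_congr h2, auxM_eq hp0 hp1]

lemma main_measure {p : ℝ} (hp0 : 0 < p) (hp1 : p < 1) :
    Measure.map (fun z : (ℝ × ℝ) × ℝ × ℝ => z.1.1 * z.1.2 + z.2.1 * z.2.2)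
        (((uniformLaw p 1).prod (gammaLaw 2)).prod ((bernoulliLaw (1 - p)).prod (gammaLaw 1)))
      = gammaLaw 2 := by
  haveI := isProbabilityMeasure_uniformLaw hp1
  haveI := isProbabilityMeasure_gammaLaw (show (0:ℝ) < 2 by norm_num)
  haveI := isProbabilityMeasure_gammaLaw (show (0:ℝ) < 1 by norm_num)
  haveI := isProbabilityMeasure_bernoulliLaw (show (0:ℝ) ≤ 1 - p by linarith)
    (show (1:ℝ) - p ≤ 1 by linarith)
  have hg : Measurable (fun z : (ℝ × ℝ) × ℝ × ℝ => z.1.1 * z.1.2 + z.2.1 * z.2.2) := by fun_prop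
  haveI : IsProbabilityMeasure (Measure.map (fun z : (ℝ × ℝ) × ℝ × ℝ => z.1.1 * z.1.2 + z.2.1 * z.2.2)
      (((uniformLaw p 1).prod (gammaLaw 2)).prod ((bernoulliLaw (1 - p)).prod (gammaLaw 1)))) :=
    Measure.isProbabilityMeasure_map hg.aemeasurable
  apply MeasureTheory.Measure.ext_of_Iic
  intro q
  rw [Measure.map_apply hg measurableSet_Iic]
  have hpre : (fun z : (ℝ × ℝ) × ℝ × ℝ => z.1.1 * z.1.2 + z.2.1 * z.2.2) ⁻¹' Iic q
      = {z : (ℝ × ℝ) × ℝ × ℝ | z.1.1 * z.1.2 + z.2.1 * z.2.2 ≤ q} := rfl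
  have hS : MeasurableSet {z : (ℝ × ℝ) × ℝ × ℝ | z.1.1 * z.1.2 + z.2.1 * z.2.2 ≤ q} :=
    measurableSet_le (by fun_prop) measurable_const
  rw [hpre, Measure.prod_apply hS]
  have hinner : ∀ x : ℝ × ℝ,
      ((bernoulliLaw (1 - p)).prod (gammaLaw 1))
          (Prod.mk x ⁻¹' {z : (ℝ × ℝ) × ℝ × ℝ | z.1.1 * z.1.2 + z.2.1 * z.2.2 ≤ q})
        = ENNReal.ofReal (1 - p) * ENNReal.ofReal (auxF1 (q - x.1 * x.2))
          + ENNReal.ofReal p * (Iic q).indicator (fun _ => 1) (x.1 * x.2) := by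
    intro x
    have : Prod.mk x ⁻¹' {z : (ℝ × ℝ) × ℝ × ℝ | z.1.1 * z.1.2 + z.2.1 * z.2.2 ≤ q}
        = {y : ℝ × ℝ | x.1 * x.2 + y.1 * y.2 ≤ q} := rfl
    rw [this, ber_section hp0 hp1]
  rw [lintegral_congr hinner]
  have hmeas1 : Measurable (fun x : ℝ × ℝ =>
      ENNReal.ofReal (1 - p) * ENNReal.ofReal (auxF1 (q - x.1 * x.2))) :=
    (((measurable_auxF1.comp (measurable_const.sub (measurable_fst.mul measurable_snd))).ennreal_ofReal).const_mul _)
  rw [lintegral_add_left hmeas1, lintegral_const_mul _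
    (show Measurable fun a : ℝ × ℝ => ENNReal.ofReal (auxF1 (q - a.1 * a.2)) from
      (measurable_auxF1.comp (measurable_const.sub (measurable_fst.mul measurable_snd))).ennreal_ofReal),
    lintegral_const_mul _ (show Measurable fun a : ℝ × ℝ =>
        (Iic q).indicator (fun _ => (1:ℝ≥0∞)) (a.1 * a.2) from
      (measurable_const.indicator measurableSet_Iic).comp (measurable_fst.mul measurable_snd))]
  have hind2 : ∫⁻ (x : ℝ × ℝ), (Iic q).indicator (fun _ => (1:ℝ≥0∞)) (x.1 * x.2)
        ∂((uniformLaw p 1).prod (gammaLaw 2))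
      = ((uniformLaw p 1).prod (gammaLaw 2)) {x : ℝ × ℝ | x.1 * x.2 ≤ q} := by
    have : ∀ x : ℝ × ℝ, (Iic q).indicator (fun _ => (1:ℝ≥0∞)) (x.1 * x.2)
        = ({x : ℝ × ℝ | x.1 * x.2 ≤ q}).indicator (fun _ => (1:ℝ≥0∞)) x := by
      intro x
      simp only [Set.indicator_apply, Set.mem_Iic, Set.mem_setOf_eq]
    rw [lintegral_congr this, lintegral_indicator
      (measurableSet_le (by fun_prop) measurable_const)]
    exact setLIntegral_one _
  rw [hind2, auxMM_eq hp0 hp1, auxL_eq hp0 hp1]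
  rw [← ENNReal.ofReal_mul (by linarith : (0:ℝ) ≤ 1 - p), ← ENNReal.ofReal_mul hp0.le,
    ← ENNReal.ofReal_add (mul_nonneg (by linarith) (auxMr_nonneg hp0 hp1 q))
      (mul_nonneg hp0.le (auxLr_nonneg hp0 hp1 q)),
    aux_combine hp0 hp1 q, ← gammaLaw_two_Iic]

theorem stmt_12 {Ω : Type*} [MeasurableSpace Ω] (P : Measure Ω) [IsProbabilityMeasure P]
    (p : ℝ) (hp0 : 0 < p) (hp1 : p < 1)
    (A B V₁ V₂ : Ω → ℝ) (hA : Measurable A) (hB : Measurable B)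
    (hV₁ : Measurable V₁) (hV₂ : Measurable V₂)
    (hAlaw : Measure.map A P = uniformLaw p 1)
    (hBlaw : Measure.map B P = bernoulliLaw (1 - p))
    (hV₁law : Measure.map V₁ P = gammaLaw 2)
    (hV₂law : Measure.map V₂ P = gammaLaw 1)
    (hind : iIndepFun ![A, B, V₁, V₂] P) :
    Measure.map (fun ω => A ω * V₁ ω + B ω * V₂ ω) P = gammaLaw 2 := by
  have hmeas : ∀ i, Measurable (![A, B, V₁, V₂] i) := by
    intro i
    fin_cases i
    · exact hA
    · exact hB
    · exact hV₁
    · exact hV₂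
  have hAV : IndepFun A V₁ P := hind.indepFun (show (0 : Fin 4) ≠ 2 by decide)
  have hBV : IndepFun B V₂ P := hind.indepFun (show (1 : Fin 4) ≠ 3 by decide)
  have h1 : Measure.map (fun ω => (A ω, V₁ ω)) P = (uniformLaw p 1).prod (gammaLaw 2) := by
    rw [← hAlaw, ← hV₁law]
    exact (indepFun_iff_map_prod_eq_prod_map_map hA.aemeasurable hV₁.aemeasurable).mp hAV
  have h2 : Measure.map (fun ω => (B ω, V₂ ω)) P = (bernoulliLaw (1 - p)).prod (gammaLaw 1) := by
    rw [← hBlaw, ← hV₂law]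
    exact (indepFun_iff_map_prod_eq_prod_map_map hB.aemeasurable hV₂.aemeasurable).mp hBV
  have h3 : IndepFun (fun ω => (A ω, V₁ ω)) (fun ω => (B ω, V₂ ω)) P :=
    hind.indepFun_prodMk_prodMk hmeas 0 2 1 3 (by decide) (by decide) (by decide) (by decide)
  have h4 : Measure.map (fun ω => ((A ω, V₁ ω), (B ω, V₂ ω))) P
      = ((uniformLaw p 1).prod (gammaLaw 2)).prod ((bernoulliLaw (1 - p)).prod (gammaLaw 1)) := by
    rw [← h1, ← h2]
    exact (indepFun_iff_map_prod_eq_prod_map_map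
      (hA.prodMk hV₁).aemeasurable (hB.prodMk hV₂).aemeasurable).mp h3
  have hg : Measurable (fun z : (ℝ × ℝ) × ℝ × ℝ => z.1.1 * z.1.2 + z.2.1 * z.2.2) := by fun_prop
  have h5 : Measure.map (fun ω => A ω * V₁ ω + B ω * V₂ ω) P
      = Measure.map (fun z : (ℝ × ℝ) × ℝ × ℝ => z.1.1 * z.1.2 + z.2.1 * z.2.2)
          (Measure.map (fun ω => ((A ω, V₁ ω), (B ω, V₂ ω))) P) := by
    rw [Measure.map_map hg ((hA.prodMk hV₁).prodMk (hB.prodMk hV₂))]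
    rfl
  rw [h5, h4, main_measure hp0 hp1]
end

section
/- Let w, y > 0 and t ∈ ℝ. Then B(w,y)⁻¹·∫₀¹ u^{w-1}(1-u)^{y-1}/(1 - i t u)^{w+y+1} du = (1 - i t)^{-w-1}·(1 - i t y/(w+y)), where B(w,y) is the Beta function and i is the imaginary unit, and complex powers are taken with the principal branch. -/
open Complex intervalIntegral MeasureTheory Metric Set

namespace S14

lemma base_re (a : ℂ) (ha : a.re = 0) (u : ℝ) : (1 - a * u).re = 1 := by
  simp [ha]

lemma base_ne (a : ℂ) (ha : a.re = 0) (u : ℝ) : (1 - a * u) ≠ 0 := by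
  intro h
  have := base_re a ha u
  rw [h] at this; simp at this

lemma base_slit (a : ℂ) (ha : a.re = 0) (u : ℝ) : (1 - a * u) ∈ slitPlane := by
  exact Or.inl (by rw [base_re a ha u]; norm_num)

lemma Isu_re (s u : ℝ) : (Complex.I * s * u).re = 0 := by simp

/-- derivative of x ↦ (1 - a x)^r for purely imaginary a -/
lemma hasDerivAt_base (a r : ℂ) (ha : a.re = 0) (v : ℝ) :
    HasDerivAt (fun x : ℝ => (1 - a * x : ℂ) ^ r) (r * (1 - a * v) ^ (r - 1) * (-a)) v := by
  have h1 : HasDerivAt (fun z : ℂ => (1 - a * z) ^ r) (r * (1 - a * v) ^ (r - 1) * (-a)) (v : ℂ) := by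
    have hin : HasDerivAt (fun z : ℂ => 1 - a * z) (-a) (v : ℂ) := by
      simpa using ((hasDerivAt_id (v : ℂ)).const_mul a).const_sub 1
    exact hin.cpow_const (base_slit a ha v)
  exact h1.comp_ofReal

lemma cont_base (a r : ℂ) (ha : a.re = 0) : Continuous (fun u : ℝ => (1 - a * u : ℂ) ^ r) := by
  rw [continuous_iff_continuousAt]
  intro u
  have h1 : Continuous (fun u : ℝ => (1 - a * u : ℂ)) := by continuity
  exact h1.continuousAt.cpow continuousAt_const (base_slit a ha u)

end S14

namespace S14
open scoped Real

noncomputable def φ (p q : ℝ) (u : ℝ) : ℂ := ((u ^ (p-1) * (1-u) ^ (q-1) : ℝ) : ℂ)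

lemma phi_eq (p q : ℝ) {u : ℝ} (hu : 0 ≤ u) (hu' : u ≤ 1) :
    φ p q u = (u : ℂ) ^ ((p:ℂ) - 1) * (1 - (u:ℂ)) ^ ((q:ℂ) - 1) := by
  unfold φ
  push_cast
  rw [Complex.ofReal_cpow hu, Complex.ofReal_cpow (by linarith)]
  push_cast
  ring_nf

lemma integrable_phi {p q : ℝ} (hp : 0 < p) (hq : 0 < q) :
    IntervalIntegrable (φ p q) volume 0 1 := by
  rw [intervalIntegrable_iff_integrableOn_Ioc_of_le zero_le_one]
  have hbase : IntegrableOn (fun x : ℝ => (x : ℂ) ^ ((p:ℂ) - 1) * (1 - (x:ℂ)) ^ ((q:ℂ) - 1)) (Ioc 0 1) volume :=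
    ((Complex.betaIntegral_convergent (by simpa using hp) (by simpa using hq)).1).mono_set
      subset_rfl
  refine hbase.congr_fun ?_ measurableSet_Ioc
  intro u hu
  exact (phi_eq p q hu.1.le hu.2).symm

lemma integrable_phi_mul {p q : ℝ} (hp : 0 < p) (hq : 0 < q) {g : ℝ → ℂ}
    (hg : Continuous g) : IntervalIntegrable (fun u => φ p q u * g u) volume 0 1 :=
  (integrable_phi hp hq).mul_continuousOn hg.continuousOn

end S14

namespace S14

variable {w y : ℝ}

lemma Is_re (s : ℝ) : (Complex.I * s).re = 0 := by simp

/-- the key integrand ψ -/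
noncomputable def ψ (w y s : ℝ) (u : ℝ) : ℂ :=
  φ w y u * (1 - Complex.I * s * u) ^ (-((w:ℂ) + y + 1))

lemma integrable_psi (hw : 0 < w) (hy : 0 < y) (s : ℝ) :
    IntervalIntegrable (ψ w y s) volume 0 1 :=
  integrable_phi_mul hw hy (cont_base _ _ (Is_re s))

lemma cont_poly (s : ℝ) (a b : ℂ) : Continuous (fun u : ℝ => a + b * (u:ℂ)) := by
  continuity

lemma ibp (hw : 0 < w) (hy : 0 < y) (s : ℝ) :
    ∫ u in (0:ℝ)..1, ((w:ℂ) - ((w:ℂ) + y - Complex.I * s * y) * u) * ψ w y s u = 0 := by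
  set r : ℂ := -((w:ℂ) + y + 1) with hr
  set g : ℝ → ℂ := fun u =>
    ((u ^ w : ℝ) : ℂ) * (((1-u) ^ y : ℝ) : ℂ) * (1 - Complex.I * s * u) ^ (-((w:ℂ) + y)) with hg
  set E : ℝ → ℂ := fun u =>
    ((w:ℂ) - ((w:ℂ) + y - Complex.I * s * y) * u) * ψ w y s u with hE
  have hEint : IntervalIntegrable E volume 0 1 := by
    have : E = fun u => φ w y u *
        (((w:ℂ) - ((w:ℂ) + y - Complex.I * s * y) * u) * (1 - Complex.I * s * u) ^ r) := by
      funext u; simp only [hE, ψ]; ring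
    rw [this]
    refine integrable_phi_mul hw hy ?_
    exact ((continuous_const.sub (continuous_const.mul Complex.continuous_ofReal)).mul
      (cont_base _ _ (Is_re s)))
  have hcont : ContinuousOn g (Icc 0 1) := by
    refine Continuous.continuousOn ?_
    refine ((Complex.continuous_ofReal.comp (Real.continuous_rpow_const hw.le)).mul
      (Complex.continuous_ofReal.comp ((Real.continuous_rpow_const hy.le).comp
        (continuous_const.sub continuous_id)))).mul (cont_base _ _ (Is_re s))
  have hderiv : ∀ u ∈ Ioo (0:ℝ) 1, HasDerivAt g (E u) u := by
    intro u hu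
    obtain ⟨hu0, hu1⟩ := hu
    have h1 : HasDerivAt (fun v : ℝ => ((v ^ w : ℝ) : ℂ)) ((w * u ^ (w-1) : ℝ) : ℂ) u :=
      (Real.hasDerivAt_rpow_const (Or.inl hu0.ne')).ofReal_comp
    have h2 : HasDerivAt (fun v : ℝ => (((1-v) ^ y : ℝ) : ℂ)) ((-(y * (1-u) ^ (y-1)) : ℝ) : ℂ) u := by
      have hin : HasDerivAt (fun v : ℝ => 1 - v) (-1) u := by
        simpa using (hasDerivAt_id u).const_sub 1
      have hout : HasDerivAt (fun x : ℝ => x ^ y) (y * (1-u) ^ (y-1)) (1-u) :=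
        Real.hasDerivAt_rpow_const (Or.inl (by linarith : (1:ℝ) - u ≠ 0))
      have := hout.comp u hin
      simpa [mul_comm] using this.ofReal_comp
    have h3 : HasDerivAt (fun v : ℝ => (1 - Complex.I * s * v : ℂ) ^ (-((w:ℂ) + y)))
        ((-((w:ℂ) + y)) * (1 - Complex.I * s * u) ^ ((-((w:ℂ) + y)) - 1) * (-(Complex.I * s))) u :=
      hasDerivAt_base (Complex.I * s) _ (Is_re s) u
    have h := (h1.mul h2).mul h3
    -- now massage the value
    have hz : (1 - Complex.I * s * u : ℂ) ≠ 0 := base_ne _ (Is_re s) u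
    have ez : (1 - Complex.I * s * u : ℂ) ^ (-((w:ℂ) + y)) =
        (1 - Complex.I * s * u) ^ r * (1 - Complex.I * s * u) := by
      calc (1 - Complex.I * s * u : ℂ) ^ (-((w:ℂ) + y)) = (1 - Complex.I * s * u) ^ (r + 1) := by
            rw [hr]; congr 1; ring
        _ = (1 - Complex.I * s * u) ^ r * (1 - Complex.I * s * u) ^ (1:ℂ) :=
            Complex.cpow_add _ _ hz
        _ = (1 - Complex.I * s * u) ^ r * (1 - Complex.I * s * u) := by rw [Complex.cpow_one]
    have ez2 : (1 - Complex.I * s * u : ℂ) ^ ((-((w:ℂ) + y)) - 1) =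
        (1 - Complex.I * s * u) ^ r := by
      rw [hr]; congr 1; ring
    have eu : (u : ℝ) ^ w = u ^ (w-1) * u := by
      rw [← Real.rpow_add_one hu0.ne' (w-1)]; norm_num
    have ev : ((1:ℝ) - u) ^ y = (1-u) ^ (y-1) * (1-u) := by
      rw [← Real.rpow_add_one (by linarith : (1:ℝ) - u ≠ 0) (y-1)]; norm_num
    refine HasDerivAt.congr_deriv h ?_
    rw [hE]; simp only [ψ, φ, Pi.mul_apply, ← hr]
    rw [ez, ez2, eu, ev]
    push_cast
    ring
  have hb : g 1 = 0 := by
    simp [hg, Real.zero_rpow hy.ne']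
  have ha : g 0 = 0 := by
    simp [hg, Real.zero_rpow hw.ne']
  have := intervalIntegral.integral_eq_sub_of_hasDeriv_right_of_le zero_le_one hcont
    (fun u hu => (hderiv u hu).hasDerivWithinAt) hEint
  rw [hb, ha, sub_zero] at this
  exact this

end S14

namespace S14

variable {w y : ℝ}

lemma norm_base_cpow_le (a : ℂ) (ha : a.re = 0) (u : ℝ) {e : ℂ} (he : e.re ≤ 0) (he' : e.im = 0) :
    ‖(1 - a * u : ℂ) ^ e‖ ≤ 1 := by
  have hz : (1 - a * u : ℂ) ≠ 0 := base_ne a ha u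
  have h1 : 1 ≤ ‖(1 - a * u : ℂ)‖ := by
    have := Complex.abs_re_le_norm (1 - a * u)
    rw [base_re a ha u] at this
    simpa using this
  rw [Complex.norm_cpow_of_ne_zero hz, he']
  simp only [zero_mul, mul_zero, Real.exp_zero, div_one]
  exact Real.rpow_le_one_of_one_le_of_nonpos h1 he

end S14

namespace S14

variable {w y : ℝ}

noncomputable def Fi (w y : ℝ) (s : ℝ) : ℂ :=
  ∫ u in (0:ℝ)..1, φ w y u * (1 - Complex.I * s * u) ^ (-((w:ℂ) + y))

noncomputable def J0 (w y s : ℝ) : ℂ := ∫ u in (0:ℝ)..1, ψ w y s u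
noncomputable def J1 (w y s : ℝ) : ℂ := ∫ u in (0:ℝ)..1, (u:ℂ) * ψ w y s u

lemma integrable_J1 (hw : 0 < w) (hy : 0 < y) (s : ℝ) :
    IntervalIntegrable (fun u : ℝ => (u:ℂ) * ψ w y s u) volume 0 1 := by
  have : (fun u : ℝ => (u:ℂ) * ψ w y s u) = fun u => φ w y u *
      ((u:ℂ) * (1 - Complex.I * s * u) ^ (-((w:ℂ) + y + 1))) := by
    funext u; simp only [ψ]; ring
  rw [this]
  exact integrable_phi_mul hw hy (Complex.continuous_ofReal.mul (cont_base _ _ (Is_re s)))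

lemma hasDerivAt_kernel (ρ : ℂ) (u s : ℝ) :
    HasDerivAt (fun x : ℝ => (1 - Complex.I * x * u : ℂ) ^ ρ)
      (ρ * (1 - Complex.I * s * u) ^ (ρ - 1) * (-(Complex.I * u))) s := by
  have h := hasDerivAt_base (Complex.I * u) ρ (by simp) s
  have hfun : (fun x : ℝ => (1 - Complex.I * u * x : ℂ) ^ ρ) =
      (fun x : ℝ => (1 - Complex.I * x * u : ℂ) ^ ρ) := by
    funext x; rw [mul_right_comm]
  have hval : (1 - Complex.I * u * s : ℂ) = 1 - Complex.I * s * u := by rw [mul_right_comm]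
  rw [hfun, hval] at h
  exact h

lemma meas_phi_restrict (hw : 0 < w) (hy : 0 < y) :
    MeasureTheory.AEStronglyMeasurable (φ w y) (volume.restrict (Set.uIoc (0:ℝ) 1)) := by
  rw [Set.uIoc_of_le zero_le_one]
  exact (integrable_phi hw hy).1.aestronglyMeasurable

set_option maxHeartbeats 1000000 in
lemma hasDerivAt_F (hw : 0 < w) (hy : 0 < y) (s : ℝ) :
    HasDerivAt (Fi w y) (Complex.I * ((w:ℂ) + y) * J1 w y s) s := by
  have hmeasφ := meas_phi_restrict hw hy
  have hF_meas : ∀ᶠ x : ℝ in nhds s, MeasureTheory.AEStronglyMeasurable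
      (fun u : ℝ => φ w y u * (1 - Complex.I * x * u) ^ (-((w:ℂ) + y)))
      (volume.restrict (Set.uIoc (0:ℝ) 1)) := by
    filter_upwards with x using
      hmeasφ.mul ((cont_base (Complex.I * (x:ℂ)) (-((w:ℂ) + y)) (Is_re x)).aestronglyMeasurable)
  have hF_int : IntervalIntegrable
      (fun u : ℝ => φ w y u * (1 - Complex.I * s * u) ^ (-((w:ℂ) + y))) volume 0 1 :=
    integrable_phi_mul hw hy (cont_base _ _ (Is_re s))
  have hF'_meas : MeasureTheory.AEStronglyMeasurable
      (fun u : ℝ => φ w y u *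
        (((w:ℂ) + y) * Complex.I * u * (1 - Complex.I * s * u) ^ (-((w:ℂ) + y + 1))))
      (volume.restrict (Set.uIoc (0:ℝ) 1)) :=
    hmeasφ.mul (((continuous_const.mul Complex.continuous_ofReal).mul
      (cont_base (Complex.I * (s:ℂ)) (-((w:ℂ) + y + 1)) (Is_re s))).aestronglyMeasurable)
  have h_bound : ∀ᵐ u ∂(volume : MeasureTheory.Measure ℝ), u ∈ Set.uIoc (0:ℝ) 1 →
      ∀ x ∈ Metric.ball s 1,
      ‖φ w y u * (((w:ℂ) + y) * Complex.I * u *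
        (1 - Complex.I * x * u) ^ (-((w:ℂ) + y + 1)))‖ ≤ (w + y) * ‖φ w y u‖ := by
    filter_upwards with u hu x _
    rw [Set.uIoc_of_le zero_le_one] at hu
    have hnorm : ‖(1 - Complex.I * x * u : ℂ) ^ (-((w:ℂ) + y + 1))‖ ≤ 1 := by
      have he : (-((w:ℂ) + y + 1)).re ≤ 0 := by
        simp only [Complex.neg_re, Complex.add_re, Complex.ofReal_re, Complex.one_re]
        linarith
      have he2 : (-((w:ℂ) + y + 1)).im = 0 := by simp
      have h := norm_base_cpow_le (Complex.I * x) (by simp) u he he2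
      simpa [mul_right_comm] using h
    have hwy : ‖((w:ℂ) + y)‖ = w + y := by
      rw [← Complex.ofReal_add, Complex.norm_real, Real.norm_eq_abs,
        abs_of_pos (by linarith : (0:ℝ) < w + y)]
    have hu1 : ‖(u:ℂ)‖ ≤ 1 := by
      simp only [Complex.norm_real, Real.norm_eq_abs, abs_of_pos hu.1]
      exact hu.2
    rw [norm_mul, norm_mul, norm_mul, norm_mul, hwy]
    calc ‖φ w y u‖ * ((w + y) * ‖Complex.I‖ * ‖(u:ℂ)‖ *
          ‖(1 - Complex.I * x * u : ℂ) ^ (-((w:ℂ) + y + 1))‖)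
        ≤ ‖φ w y u‖ * ((w + y) * 1 * 1 * 1) := by
          gcongr <;> simp [Complex.norm_I, hu1, hnorm]
      _ = (w + y) * ‖φ w y u‖ := by ring
  have bound_int : IntervalIntegrable (fun u : ℝ => (w + y) * ‖φ w y u‖) volume 0 1 :=
    ((integrable_phi hw hy).norm).const_mul _
  have h_diff : ∀ᵐ u ∂(volume : MeasureTheory.Measure ℝ), u ∈ Set.uIoc (0:ℝ) 1 →
      ∀ x ∈ Metric.ball s 1,
      HasDerivAt (fun x : ℝ => φ w y u * (1 - Complex.I * x * u) ^ (-((w:ℂ) + y)))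
        (φ w y u * (((w:ℂ) + y) * Complex.I * u *
          (1 - Complex.I * x * u) ^ (-((w:ℂ) + y + 1)))) x := by
    filter_upwards with u _ x _
    have hk := (hasDerivAt_kernel (-((w:ℂ) + y)) u x).const_mul (φ w y u)
    have e : φ w y u * (-((w:ℂ) + y) * (1 - Complex.I * x * u) ^ (-((w:ℂ) + y) - 1) *
        (-(Complex.I * u))) = φ w y u * (((w:ℂ) + y) * Complex.I * u *
          (1 - Complex.I * x * u) ^ (-((w:ℂ) + y + 1))) := by
      rw [show (-((w:ℂ) + y) - 1) = -((w:ℂ) + y + 1) by ring]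
      ring
    rw [e] at hk
    exact hk
  have key := intervalIntegral.hasDerivAt_integral_of_dominated_loc_of_deriv_le (Metric.ball_mem_nhds s one_pos)
    hF_meas hF_int hF'_meas h_bound bound_int h_diff
  have h2 := key.2
  have e2 : (∫ u in (0:ℝ)..1, φ w y u *
      (((w:ℂ) + y) * Complex.I * u * (1 - Complex.I * s * u) ^ (-((w:ℂ) + y + 1)))) =
      Complex.I * ((w:ℂ) + y) * J1 w y s := by
    rw [J1, ← intervalIntegral.integral_const_mul]
    apply intervalIntegral.integral_congr
    intro u _
    simp only [ψ]; ring
  rw [e2] at h2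
  exact h2

end S14

namespace S14

variable {w y : ℝ}

lemma F_eq (hw : 0 < w) (hy : 0 < y) (s : ℝ) :
    Fi w y s = J0 w y s - Complex.I * s * J1 w y s := by
  have hpt : ∀ u ∈ Set.uIcc (0:ℝ) 1,
      φ w y u * (1 - Complex.I * s * u) ^ (-((w:ℂ) + y)) =
        ψ w y s u - Complex.I * s * ((u:ℂ) * ψ w y s u) := by
    intro u _
    have hz : (1 - Complex.I * s * u : ℂ) ≠ 0 := base_ne _ (Is_re s) u
    have ez : (1 - Complex.I * s * u : ℂ) ^ (-((w:ℂ) + y)) =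
        (1 - Complex.I * s * u) ^ (-((w:ℂ) + y + 1)) * (1 - Complex.I * s * u) := by
      calc (1 - Complex.I * s * u : ℂ) ^ (-((w:ℂ) + y))
          = (1 - Complex.I * s * u) ^ (-((w:ℂ) + y + 1) + 1) := by congr 1; ring
        _ = (1 - Complex.I * s * u) ^ (-((w:ℂ) + y + 1)) * (1 - Complex.I * s * u) ^ (1:ℂ) :=
            Complex.cpow_add _ _ hz
        _ = _ := by rw [Complex.cpow_one]
    rw [ez]
    simp only [ψ]
    ring
  rw [Fi, intervalIntegral.integral_congr hpt, intervalIntegral.integral_sub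
    (integrable_psi hw hy s) ((integrable_J1 hw hy s).const_mul _),
    intervalIntegral.integral_const_mul, J0, J1]

lemma J0_rel (hw : 0 < w) (hy : 0 < y) (s : ℝ) :
    (w:ℂ) * J0 w y s = ((w:ℂ) + y - Complex.I * s * y) * J1 w y s := by
  have h := ibp hw hy s
  have hpt : ∀ u ∈ Set.uIcc (0:ℝ) 1,
      ((w:ℂ) - ((w:ℂ) + y - Complex.I * s * y) * u) * ψ w y s u =
        (w:ℂ) * ψ w y s u - ((w:ℂ) + y - Complex.I * s * y) * ((u:ℂ) * ψ w y s u) := by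
    intro u _; ring
  rw [intervalIntegral.integral_congr hpt, intervalIntegral.integral_sub
    ((integrable_psi hw hy s).const_mul _) ((integrable_J1 hw hy s).const_mul _),
    intervalIntegral.integral_const_mul, intervalIntegral.integral_const_mul] at h
  rw [← J0, ← J1] at h
  linear_combination h
  
end S14

namespace S14

variable {w y : ℝ}

lemma wF_rel (hw : 0 < w) (hy : 0 < y) (s : ℝ) :
    (w:ℂ) * Fi w y s = ((w:ℂ) + y) * (1 - Complex.I * s) * J1 w y s := by
  rw [F_eq hw hy s]
  have h := J0_rel hw hy s
  linear_combination h

lemma base1_ne (s : ℝ) : (1 - Complex.I * s : ℂ) ≠ 0 := by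
  have := base_ne Complex.I (by simp) s
  simpa using this

lemma hasDerivAt_H (hw : 0 < w) (hy : 0 < y) (s : ℝ) :
    HasDerivAt (fun x : ℝ => Fi w y x * (1 - Complex.I * x) ^ (w:ℂ)) 0 s := by
  have hF := hasDerivAt_F hw hy s
  have hG : HasDerivAt (fun x : ℝ => (1 - Complex.I * x : ℂ) ^ (w:ℂ))
      ((w:ℂ) * (1 - Complex.I * s) ^ ((w:ℂ) - 1) * (-Complex.I)) s := by
    have := hasDerivAt_base Complex.I (w:ℂ) (by simp) s
    simpa using this
  have h := hF.mul hG
  have e0 : Complex.I * ((w:ℂ) + y) * J1 w y s * (1 - Complex.I * s) ^ (w:ℂ) +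
      Fi w y s * ((w:ℂ) * (1 - Complex.I * s) ^ ((w:ℂ) - 1) * (-Complex.I)) = 0 := by
    have hz := base1_ne s
    have ez : (1 - Complex.I * s : ℂ) ^ (w:ℂ) =
        (1 - Complex.I * s) ^ ((w:ℂ) - 1) * (1 - Complex.I * s) := by
      calc (1 - Complex.I * s : ℂ) ^ (w:ℂ)
          = (1 - Complex.I * s) ^ (((w:ℂ) - 1) + 1) := by congr 1; ring
        _ = (1 - Complex.I * s) ^ ((w:ℂ) - 1) * (1 - Complex.I * s) ^ (1:ℂ) :=
            Complex.cpow_add _ _ hz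
        _ = _ := by rw [Complex.cpow_one]
    rw [ez]
    have hrel := wF_rel hw hy s
    linear_combination (-(Complex.I * (1 - Complex.I * s) ^ ((w:ℂ) - 1))) * hrel
  rw [e0] at h
  exact h

lemma H_const (hw : 0 < w) (hy : 0 < y) (t : ℝ) :
    Fi w y t * (1 - Complex.I * t) ^ (w:ℂ) = Fi w y 0 := by
  have h := is_const_of_deriv_eq_zero (𝕜 := ℝ)
    (f := fun x : ℝ => Fi w y x * (1 - Complex.I * x) ^ (w:ℂ))
    (fun x => (hasDerivAt_H hw hy x).differentiableAt)
    (fun x => (hasDerivAt_H hw hy x).deriv) t 0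
  simpa using h

lemma F_zero (hw : 0 < w) (hy : 0 < y) :
    Fi w y 0 = ((Real.Gamma w * Real.Gamma y / Real.Gamma (w + y) : ℝ) : ℂ) := by
  have h1 : Fi w y 0 = Complex.betaIntegral w y := by
    rw [Fi, Complex.betaIntegral]
    apply intervalIntegral.integral_congr
    intro u hu
    rw [Set.uIcc_of_le zero_le_one] at hu
    show φ w y u * (1 - Complex.I * ((0:ℝ):ℂ) * u) ^ (-((w:ℂ) + y))
        = (u:ℂ) ^ ((w:ℂ) - 1) * (1 - (u:ℂ)) ^ ((y:ℂ) - 1)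
    rw [phi_eq w y hu.1 hu.2]
    simp
  have h2 := Complex.Gamma_mul_Gamma_eq_betaIntegral
    (s := (w:ℂ)) (t := (y:ℂ)) (by simpa using hw) (by simpa using hy)
  have h3 : ((w:ℂ) + y) = ((w + y : ℝ) : ℂ) := by push_cast; ring
  rw [h3, Complex.Gamma_ofReal, Complex.Gamma_ofReal, Complex.Gamma_ofReal] at h2
  have h4 : (Real.Gamma (w + y) : ℂ) ≠ 0 := by
    simpa using (Real.Gamma_pos_of_pos (by linarith : (0:ℝ) < w + y)).ne'
  rw [h1]
  push_cast
  rw [eq_div_iff h4]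
  linear_combination -h2

end S14

open Complex intervalIntegral

theorem stmt_14 (w y t : ℝ) (hw : 0 < w) (hy : 0 < y) :
    ((Real.Gamma w * Real.Gamma y / Real.Gamma (w + y) : ℝ) : ℂ)⁻¹ *
        ∫ u in (0:ℝ)..1,
          ((u ^ (w - 1) * (1 - u) ^ (y - 1) : ℝ) : ℂ) /
            (1 - Complex.I * t * u) ^ ((w : ℂ) + y + 1) =
      (1 - Complex.I * t) ^ (-(w : ℂ) - 1) * (1 - Complex.I * t * (y / (w + y))) := by
  set B : ℂ := ((Real.Gamma w * Real.Gamma y / Real.Gamma (w + y) : ℝ) : ℂ) with hB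
  have hBne : B ≠ 0 := by
    rw [hB]
    simp only [ne_eq, Complex.ofReal_eq_zero]
    positivity
  have hint : (∫ u in (0:ℝ)..1,
      ((u ^ (w - 1) * (1 - u) ^ (y - 1) : ℝ) : ℂ) /
        (1 - Complex.I * t * u) ^ ((w : ℂ) + y + 1)) = S14.J0 w y t := by
    rw [S14.J0]
    apply intervalIntegral.integral_congr
    intro u _
    show ((u ^ (w - 1) * (1 - u) ^ (y - 1) : ℝ) : ℂ) /
        (1 - Complex.I * t * u) ^ ((w : ℂ) + y + 1) =
      S14.φ w y u * (1 - Complex.I * t * u) ^ (-((w:ℂ) + y + 1))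
    rw [Complex.cpow_neg, div_eq_mul_inv]
    rfl
  rw [hint]
  -- basic nonvanishing facts
  have hZne : (1 - Complex.I * t : ℂ) ≠ 0 := S14.base1_ne t
  have hZw_ne : (1 - Complex.I * t : ℂ) ^ (w:ℂ) ≠ 0 := by
    intro h
    rcases (Complex.cpow_eq_zero_iff _ _).mp h with ⟨h1, -⟩
    exact hZne h1
  have hcne : ((w:ℂ) + y) ≠ 0 := by
    rw [show ((w:ℂ) + y) = ((w + y : ℝ) : ℂ) by push_cast; ring]
    simp only [ne_eq, Complex.ofReal_eq_zero]
    linarith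
  have hwne : (w:ℂ) ≠ 0 := by
    simp only [ne_eq, Complex.ofReal_eq_zero]; exact hw.ne'
  -- main relations
  have hA : S14.Fi w y t * (1 - Complex.I * t) ^ (w:ℂ) = B :=
    (S14.H_const hw hy t).trans (S14.F_zero hw hy)
  have hBrel : (w:ℂ) * S14.Fi w y t =
      ((w:ℂ) + y) * (1 - Complex.I * t) * S14.J1 w y t := S14.wF_rel hw hy t
  have hCrel : (w:ℂ) * S14.J0 w y t =
      ((w:ℂ) + y - Complex.I * t * y) * S14.J1 w y t := S14.J0_rel hw hy t
  -- J0 in terms of F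
  have hJ0 : ((w:ℂ) + y) * (1 - Complex.I * t) * S14.J0 w y t =
      ((w:ℂ) + y - Complex.I * t * y) * S14.Fi w y t := by
    apply mul_left_cancel₀ hwne
    linear_combination (((w:ℂ) + y) * (1 - Complex.I * t)) * hCrel -
      ((w:ℂ) + y - Complex.I * t * y) * hBrel
  -- cpow arithmetic
  have hpow : (1 - Complex.I * t : ℂ) ^ (-(w:ℂ) - 1) =
      ((1 - Complex.I * t) ^ (w:ℂ))⁻¹ * (1 - Complex.I * t)⁻¹ := by
    calc (1 - Complex.I * t : ℂ) ^ (-(w:ℂ) - 1)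
        = (1 - Complex.I * t) ^ (-((w:ℂ) + 1)) := by congr 1; ring
      _ = ((1 - Complex.I * t) ^ ((w:ℂ) + 1))⁻¹ := by rw [Complex.cpow_neg]
      _ = ((1 - Complex.I * t) ^ (w:ℂ) * (1 - Complex.I * t) ^ (1:ℂ))⁻¹ := by
          rw [Complex.cpow_add _ _ hZne]
      _ = ((1 - Complex.I * t) ^ (w:ℂ))⁻¹ * (1 - Complex.I * t)⁻¹ := by
          rw [Complex.cpow_one, mul_inv]
  rw [hpow]
  -- finish by field arithmetic
  have hFval : S14.Fi w y t = B * ((1 - Complex.I * t) ^ (w:ℂ))⁻¹ := by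
    field_simp at hA ⊢
    linear_combination hA
  rw [hFval] at hJ0
  field_simp [hBne, hZne, hZw_ne, hcne] at hJ0 ⊢
  linear_combination hJ0
end
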